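/- arXiv:0912.2038 — 7 statements merged into one kernel-verified Lean document; each statement's English description precedes it below -/
import Mathlib

section
/- Let F be a field of characteristic p > 0 containing a primitive e-th root of unity ζ with e > 1, and let K = F(q) be the field of rational functions. For a non-zero integer l define ν_{e,p}(l) = 0 if e ∤ l, and ν_{e,p}(l) = 1 + ν_p(l/e) otherwise, where ν_p is the p-adic valuation. Suppose r ≥ 1 and (a_1,…,a_r), (b_1,…,b_r) are tuples of non-zero integers with ν_{e,p}(a_j) ≥ ν_{e,p}(b_j) for each j. Then there exist Laurent polynomials f(q), g(q) ∈ F[q, q^{-1}] with g(ζ) ≠ 0 such that (∏_{j=1}^r [a_j]_q) / (∏_{j=1}^r [b_j]_q) = f(q)/g(q) in K, where for l ∈ ℤ, [l]_q = (q^l − 1)/(q − 1) ∈ K. -/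
/-- The Gaussian integer `[l]_q = (q^l − 1)/(q − 1)` in the field of rational functions. -/
noncomputable def lgauss (F : Type*) [Field F] (l : ℤ) : RatFunc F :=
  (RatFunc.X ^ l - 1) / (RatFunc.X - 1)

/-- Embedding of a Laurent polynomial into the field of rational functions. -/
noncomputable def laurentToRatFunc {F : Type*} [Field F] (f : LaurentPolynomial F) :
    RatFunc F :=
  f.coeff.sum fun n a => RatFunc.C a * RatFunc.X ^ n

/-- Evaluation of a Laurent polynomial at an element of the field. -/
noncomputable def laurentEval {F : Type*} [Field F] (ζ : F) (f : LaurentPolynomial F) : F :=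
  f.coeff.sum fun n a => a * ζ ^ n

/-- `ν_{e,p}(l) = 0` if `e ∤ l` and `1 + ν_p(l/e)` otherwise. -/
def nuep (e p : ℕ) (l : ℤ) : ℕ :=
  if (e : ℤ) ∣ l then 1 + padicValInt p (l / e) else 0

open Polynomial LaurentPolynomial

section Hom
variable {F : Type*} [Field F]

/-- zpow monoid hom at a nonzero element of a field-like structure. -/
noncomputable def zpowHom {A : Type*} [DivisionRing A] (x : A) (hx : x ≠ 0) :
    Multiplicative ℤ →* A :=
  (Units.coeHom A).comp (zpowersHom Aˣ (Units.mk0 x hx))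

lemma zpowHom_apply {A : Type*} [DivisionRing A] (x : A) (hx : x ≠ 0) (n : ℤ) :
    zpowHom x hx (Multiplicative.ofAdd n) = x ^ n := by
  simp [zpowHom, zpowersHom_apply, Units.val_zpow_eq_zpow_val]

noncomputable def ratHom (F : Type*) [Field F] : LaurentPolynomial F →ₐ[F] RatFunc F :=
  AddMonoidAlgebra.lift F (RatFunc F) ℤ (zpowHom RatFunc.X RatFunc.X_ne_zero)

lemma laurentToRatFunc_eq (f : LaurentPolynomial F) :
    laurentToRatFunc f = ratHom F f := by
  rw [ratHom, AddMonoidAlgebra.lift_apply, laurentToRatFunc]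
  refine Finset.sum_congr rfl fun n _ => ?_
  dsimp only
  rw [zpowHom_apply, Algebra.smul_def, RatFunc.algebraMap_eq_C]

noncomputable def evalHom (F : Type*) [Field F] (z : F) (hz : z ≠ 0) :
    LaurentPolynomial F →ₐ[F] F :=
  AddMonoidAlgebra.lift F F ℤ (zpowHom z hz)

lemma laurentEval_eq (z : F) (hz : z ≠ 0) (f : LaurentPolynomial F) :
    laurentEval z f = evalHom F z hz f := by
  rw [evalHom, AddMonoidAlgebra.lift_apply, laurentEval]
  refine Finset.sum_congr rfl fun n _ => ?_
  dsimp only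
  rw [zpowHom_apply, smul_eq_mul]

lemma ratHom_T (n : ℤ) : ratHom F (T n) = RatFunc.X ^ n := by
  rw [ratHom, T, AddMonoidAlgebra.lift_single, zpowHom_apply, one_smul]

lemma evalHom_T (z : F) (hz : z ≠ 0) (n : ℤ) : evalHom F z hz (T n) = z ^ n := by
  rw [evalHom, T, AddMonoidAlgebra.lift_single, zpowHom_apply, one_smul]

lemma ratHom_toLaurent (P : F[X]) :
    ratHom F (toLaurent P) = algebraMap F[X] (RatFunc F) P := by
  have : (ratHom F).toRingHom.comp (toLaurent (R := F)) = algebraMap F[X] (RatFunc F) := by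
    apply Polynomial.ringHom_ext
    · intro a
      rw [RingHom.comp_apply]
      show ratHom F (toLaurent (Polynomial.C a)) = _
      rw [Polynomial.toLaurent_C, LaurentPolynomial.C_eq_algebraMap, AlgHom.commutes,
        RatFunc.algebraMap_eq_C, RatFunc.algebraMap_C]
    · show ratHom F (toLaurent Polynomial.X) = _
      rw [Polynomial.toLaurent_X]
      simp [ratHom_T, RatFunc.algebraMap_X]
  exact congrFun (congrArg DFunLike.coe this) P

lemma evalHom_toLaurent (z : F) (hz : z ≠ 0) (P : F[X]) :
    evalHom F z hz (toLaurent P) = P.eval z := by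
  have : (evalHom F z hz).toRingHom.comp (toLaurent (R := F)) = Polynomial.evalRingHom z := by
    apply Polynomial.ringHom_ext
    · intro a
      show evalHom F z hz (toLaurent (Polynomial.C a)) = _
      rw [Polynomial.toLaurent_C, LaurentPolynomial.C_eq_algebraMap, AlgHom.commutes]
      simp
    · show evalHom F z hz (toLaurent Polynomial.X) = _
      rw [Polynomial.toLaurent_X]
      simp [evalHom_T]
  exact congrFun (congrArg DFunLike.coe this) P

end Hom

section Gauss
variable {F : Type*} [Field F]

noncomputable def geomP (F : Type*) [Field F] (m : ℕ) : F[X] :=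
  ∑ i ∈ Finset.range m, Polynomial.X ^ i

lemma geomP_mul (m : ℕ) : geomP F m * (Polynomial.X - 1) = Polynomial.X ^ m - 1 :=
  geom_sum_mul _ m

lemma geomP_ne_zero (m : ℕ) (hm : 0 < m) : geomP F m ≠ 0 := by
  intro h
  have h2 : (Polynomial.X : F[X]) ^ m - Polynomial.C 1 ≠ 0 := X_pow_sub_C_ne_zero hm 1
  rw [Polynomial.C_1, ← geomP_mul, h, zero_mul] at h2
  exact h2 rfl

lemma X_sub_one_ne_zero : (RatFunc.X : RatFunc F) - 1 ≠ 0 := by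
  have h : ((Polynomial.X - 1 : F[X])) ≠ 0 := by
    have := Polynomial.X_sub_C_ne_zero (R := F) 1
    simpa using this
  have h2 := RatFunc.algebraMap_ne_zero (K := F) h
  simpa [RatFunc.algebraMap_X] using h2

lemma lgauss_natCast (m : ℕ) (hm : 0 < m) :
    lgauss F (m : ℤ) = algebraMap F[X] (RatFunc F) (geomP F m) := by
  rw [lgauss, zpow_natCast, div_eq_iff (X_sub_one_ne_zero (F := F)), geomP, map_sum]
  simp only [map_pow, RatFunc.algebraMap_X]
  exact (geom_sum_mul _ m).symm

lemma lgauss_neg (l : ℤ) (hl : l < 0) :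
    lgauss F l = (-(RatFunc.X ^ l)) * lgauss F (-l) := by
  rw [lgauss, lgauss, ← mul_div_assoc]
  congr 1
  have h1 : (RatFunc.X : RatFunc F) ^ l * RatFunc.X ^ (-l) = 1 := by
    rw [← zpow_add₀ (RatFunc.X_ne_zero (K := F)), add_neg_cancel, zpow_zero]
  linear_combination h1

noncomputable def Ul (F : Type*) [Field F] (l : ℤ) : LaurentPolynomial F :=
  if 0 < l then 1 else -(T l)

lemma lgauss_eq (l : ℤ) (hl : l ≠ 0) :
    lgauss F l = ratHom F (Ul F l) * algebraMap F[X] (RatFunc F) (geomP F l.natAbs) := by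
  rcases hl.lt_or_gt with h | h
  · rw [Ul, if_neg (not_lt.2 h.le), map_neg, ratHom_T]
    have hnat : (l.natAbs : ℤ) = -l := by omega
    have h2 := lgauss_natCast (F := F) l.natAbs (Int.natAbs_pos.2 hl)
    rw [hnat] at h2
    rw [lgauss_neg l h, h2]
  · rw [Ul, if_pos h, map_one, one_mul]
    have hnat : (l.natAbs : ℤ) = l := Int.natAbs_of_nonneg h.le
    rw [← hnat]
    exact lgauss_natCast _ (Int.natAbs_pos.2 hl)

lemma evalHom_Ul_ne_zero (z : F) (hz : z ≠ 0) (l : ℤ) : evalHom F z hz (Ul F l) ≠ 0 := by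
  rw [Ul]
  split
  · simp
  · rw [map_neg, evalHom_T, neg_ne_zero]
    exact zpow_ne_zero _ hz

lemma ratHom_Ul_ne_zero (l : ℤ) : ratHom F (Ul F l) ≠ 0 := by
  rw [Ul]
  split
  · simp
  · rw [map_neg, ratHom_T, neg_ne_zero]
    exact zpow_ne_zero _ (RatFunc.X_ne_zero)

lemma rootMultiplicity_pow' {f : F[X]} (hf : f ≠ 0) (x : F) (n : ℕ) :
    rootMultiplicity x (f ^ n) = n * rootMultiplicity x f := by
  induction n with
  | zero =>
    rw [pow_zero, zero_mul, Polynomial.rootMultiplicity_eq_zero]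
    simp [Polynomial.IsRoot]
  | succ n ih =>
    rw [pow_succ, Polynomial.rootMultiplicity_mul
      (mul_ne_zero (pow_ne_zero _ hf) hf), ih]
    ring

lemma rootMultiplicity_prod {ι : Type*} (s : Finset ι) (f : ι → F[X])
    (h : ∀ i ∈ s, f i ≠ 0) (x : F) :
    rootMultiplicity x (∏ i ∈ s, f i) = ∑ i ∈ s, rootMultiplicity x (f i) := by
  classical
  induction s using Finset.induction_on with
  | empty =>
    simp only [Finset.prod_empty, Finset.sum_empty]
    rw [Polynomial.rootMultiplicity_eq_zero]
    simp [Polynomial.IsRoot]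
  | insert i s' hni ih =>
    rw [Finset.prod_insert hni, Finset.sum_insert hni,
      Polynomial.rootMultiplicity_mul
        (mul_ne_zero (h i (Finset.mem_insert_self i s'))
          (Finset.prod_ne_zero_iff.2 fun j hj => h j (Finset.mem_insert_of_mem hj))),
      ih (fun j hj => h j (Finset.mem_insert_of_mem hj))]

variable (p e : ℕ) [Fact p.Prime] [CharP F p] {ζ : F}

lemma p_not_dvd_e (hζ : IsPrimitiveRoot ζ e) (he : 1 < e) : ¬ p ∣ e := by
  have hp : p.Prime := Fact.out
  rintro ⟨k, hk⟩
  have hk0 : 0 < k := Nat.pos_of_ne_zero (by rintro rfl; simp at hk; omega)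
  have hke : k < e := by
    have h2k : 2 * k ≤ p * k := Nat.mul_le_mul_right k hp.two_le
    omega
  have h1 : (ζ ^ k) ^ p = 1 := by
    rw [← pow_mul, mul_comm, ← hk, hζ.pow_eq_one_iff_dvd]
  have h2 : (ζ ^ k - 1) ^ p = 0 := by
    rw [sub_pow_char, h1, one_pow, sub_self]
  have h3 : ζ ^ k = 1 := by
    have h4 := (pow_eq_zero_iff hp.ne_zero).1 h2
    rwa [sub_eq_zero] at h4
  exact hζ.pow_ne_one_of_pos_of_lt hk0.ne' hke h3

end Gauss

section Key
variable {F : Type*} [Field F] (p e : ℕ) [Fact p.Prime] [CharP F p] {ζ : F}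

lemma rootMult_X_pow_sub_one (hζ : IsPrimitiveRoot ζ e) (he : 1 < e)
    (m : ℕ) (hm : 0 < m) :
    rootMultiplicity ζ ((Polynomial.X : F[X]) ^ m - 1) =
      if e ∣ m then p ^ padicValNat p m else 0 := by
  have hp : p.Prime := Fact.out
  set v := m.factorization p with hv
  set m' := m / p ^ v with hm'def
  have hmm : p ^ v * m' = m := Nat.ordProj_mul_ordCompl_eq_self m p
  have hpm' : ¬ p ∣ m' := Nat.not_dvd_ordCompl hp hm.ne'
  have hm'0 : 0 < m' := Nat.ordCompl_pos p hm.ne'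
  have hXm' : ((Polynomial.X : F[X]) ^ m' - 1) ≠ 0 := by
    have := X_pow_sub_C_ne_zero (R := F) hm'0 1
    rwa [Polynomial.C_1] at this
  have hfact : (Polynomial.X : F[X]) ^ m - 1 = ((Polynomial.X : F[X]) ^ m' - 1) ^ p ^ v := by
    rw [sub_pow_char_pow, ← pow_mul, one_pow, mul_comm, hmm]
  have hsep : ((Polynomial.X : F[X]) ^ m' - 1).Separable := by
    have hcast : ((m' : F)) ≠ 0 := by
      rw [Ne, CharP.cast_eq_zero_iff F p]
      exact hpm'
    have := Polynomial.separable_X_pow_sub_C (F := F) 1 hcast one_ne_zero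
    rwa [Polynomial.C_1] at this
  have hroot : rootMultiplicity ζ ((Polynomial.X : F[X]) ^ m' - 1) =
      if e ∣ m' then 1 else 0 := by
    by_cases hd : e ∣ m'
    · rw [if_pos hd]
      have hisr : Polynomial.IsRoot ((Polynomial.X : F[X]) ^ m' - 1) ζ := by
        simp [Polynomial.IsRoot, (hζ.pow_eq_one_iff_dvd m').2 hd]
      have h1 := (Polynomial.rootMultiplicity_pos hXm').2 hisr
      have h2 := Polynomial.rootMultiplicity_le_one_of_separable hsep ζ
      omega
    · rw [if_neg hd]
      apply Polynomial.rootMultiplicity_eq_zero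
      simp only [Polynomial.IsRoot, Polynomial.eval_sub, Polynomial.eval_pow,
        Polynomial.eval_X, Polynomial.eval_one, sub_eq_zero]
      intro h
      exact hd ((hζ.pow_eq_one_iff_dvd m').1 h)
  have hpe : ¬ p ∣ e := p_not_dvd_e p e hζ he
  have hcp : Nat.Coprime e (p ^ v) :=
    (Nat.Coprime.pow_left v ((hp.coprime_iff_not_dvd).2 hpe)).symm
  have hdvd_iff : e ∣ m ↔ e ∣ m' := by
    constructor
    · intro h
      exact hcp.dvd_of_dvd_mul_left (by rw [hmm]; exact h)
    · intro h
      exact h.trans ⟨p ^ v, by rw [← hmm]; ring⟩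
  have hval : padicValNat p m = v := (Nat.factorization_def m hp).symm
  rw [hfact, rootMultiplicity_pow' hXm', hroot, hval]
  by_cases hd : e ∣ m
  · rw [if_pos hd, if_pos (hdvd_iff.1 hd), mul_one]
  · rw [if_neg hd, if_neg (fun h => hd (hdvd_iff.2 h)), mul_zero]

end Key

section Key2
variable {F : Type*} [Field F] (p e : ℕ) [Fact p.Prime] [CharP F p] {ζ : F}

lemma rootMult_geom (hζ : IsPrimitiveRoot ζ e) (he : 1 < e) (m : ℕ) (hm : 0 < m) :
    rootMultiplicity ζ (geomP F m) = if e ∣ m then p ^ padicValNat p m else 0 := by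
  have hζ1 : ζ ≠ 1 := hζ.ne_one he
  have h0 : geomP F m * (Polynomial.X - 1) ≠ 0 := by
    rw [geomP_mul]
    simpa [Polynomial.C_1] using X_pow_sub_C_ne_zero (R := F) hm 1
  have h1 := Polynomial.rootMultiplicity_mul (p := geomP F m)
    (q := Polynomial.X - 1) (x := ζ) h0
  rw [geomP_mul] at h1
  have h2 : rootMultiplicity ζ (Polynomial.X - 1 : F[X]) = 0 := by
    apply Polynomial.rootMultiplicity_eq_zero
    simp [Polynomial.IsRoot, sub_eq_zero, hζ1]
  rw [rootMult_X_pow_sub_one p e hζ he m hm] at h1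
  omega

lemma nuep_eq (l : ℤ) (hl : l ≠ 0) (hpe : ¬ p ∣ e) (he : 0 < e) :
    nuep e p l = if e ∣ l.natAbs then 1 + padicValNat p l.natAbs else 0 := by
  rw [nuep]
  have hdvd : (e : ℤ) ∣ l ↔ e ∣ l.natAbs := by
    rw [← Int.natAbs_dvd_natAbs, Int.natAbs_natCast]
  by_cases hd : (e : ℤ) ∣ l
  · rw [if_pos hd, if_pos (hdvd.1 hd)]
    congr 1
    rw [padicValInt, Int.natAbs_ediv_of_dvd hd, Int.natAbs_natCast]
    have hn : l.natAbs ≠ 0 := Int.natAbs_ne_zero.2 hl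
    obtain ⟨k, hk⟩ := hdvd.1 hd
    have hk0 : k ≠ 0 := by rintro rfl; rw [mul_zero] at hk; exact hn hk
    rw [hk, Nat.mul_div_cancel_left k he, padicValNat.mul he.ne' hk0,
      padicValNat.eq_zero_of_not_dvd hpe, zero_add]
  · rw [if_neg hd, if_neg (fun h => hd (hdvd.2 h))]

end Key2

/-- Lemma 3.12 ('FirstDivideLemma') of the paper. -/
theorem first_divide_lemma (F : Type*) [Field F] (p e : ℕ) [Fact p.Prime] [CharP F p]
    (he : 1 < e) (ζ : F) (hζ : IsPrimitiveRoot ζ e)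
    (r : ℕ) (hr : 1 ≤ r) (a b : ℕ → ℤ)
    (ha : ∀ j ∈ Finset.Icc 1 r, a j ≠ 0) (hb : ∀ j ∈ Finset.Icc 1 r, b j ≠ 0)
    (hnu : ∀ j ∈ Finset.Icc 1 r, nuep e p (b j) ≤ nuep e p (a j)) :
    ∃ f g : LaurentPolynomial F, laurentEval ζ g ≠ 0 ∧
      (∏ j ∈ Finset.Icc 1 r, lgauss F (a j)) / (∏ j ∈ Finset.Icc 1 r, lgauss F (b j)) =
        laurentToRatFunc f / laurentToRatFunc g := by
  classical
  have hp : p.Prime := Fact.out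
  have hζ0 : ζ ≠ 0 := hζ.ne_zero (by omega)
  have hpe : ¬ p ∣ e := p_not_dvd_e p e hζ he
  set S := Finset.Icc 1 r with hS
  set A : F[X] := ∏ j ∈ S, geomP F (a j).natAbs with hAdef
  set B : F[X] := ∏ j ∈ S, geomP F (b j).natAbs with hBdef
  have hAj : ∀ j ∈ S, geomP F (a j).natAbs ≠ (0 : F[X]) :=
    fun j hj => geomP_ne_zero _ (Int.natAbs_pos.2 (ha j hj))
  have hBj : ∀ j ∈ S, geomP F (b j).natAbs ≠ (0 : F[X]) :=
    fun j hj => geomP_ne_zero _ (Int.natAbs_pos.2 (hb j hj))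
  have hA0 : A ≠ 0 := Finset.prod_ne_zero_iff.2 hAj
  have hB0 : B ≠ 0 := Finset.prod_ne_zero_iff.2 hBj
  set Ma := rootMultiplicity ζ A with hMa
  set Mb := rootMultiplicity ζ B with hMb
  have hMba : Mb ≤ Ma := by
    rw [hMa, hMb, hAdef, hBdef, rootMultiplicity_prod S _ hAj,
      rootMultiplicity_prod S _ hBj]
    refine Finset.sum_le_sum fun j hj => ?_
    rw [rootMult_geom p e hζ he _ (Int.natAbs_pos.2 (ha j hj)),
      rootMult_geom p e hζ he _ (Int.natAbs_pos.2 (hb j hj))]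
    have h1 := hnu j hj
    rw [nuep_eq p e _ (ha j hj) hpe (by omega),
      nuep_eq p e _ (hb j hj) hpe (by omega)] at h1
    by_cases hdb : e ∣ (b j).natAbs
    · rw [if_pos hdb] at h1 ⊢
      by_cases hda : e ∣ (a j).natAbs
      · rw [if_pos hda] at h1 ⊢
        exact Nat.pow_le_pow_right hp.pos (by omega)
      · rw [if_neg hda] at h1
        omega
    · rw [if_neg hdb]
      exact Nat.zero_le _
  set A0 := A /ₘ (Polynomial.X - Polynomial.C ζ) ^ Ma with hA0def
  set B0 := B /ₘ (Polynomial.X - Polynomial.C ζ) ^ Mb with hB0def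
  have hAfact : (Polynomial.X - Polynomial.C ζ) ^ Ma * A0 = A :=
    Polynomial.pow_mul_divByMonic_rootMultiplicity_eq A ζ
  have hBfact : (Polynomial.X - Polynomial.C ζ) ^ Mb * B0 = B :=
    Polynomial.pow_mul_divByMonic_rootMultiplicity_eq B ζ
  have hB0ζ : B0.eval ζ ≠ 0 :=
    Polynomial.eval_divByMonic_pow_rootMultiplicity_ne_zero ζ hB0
  set Ua : LaurentPolynomial F := ∏ j ∈ S, Ul F (a j) with hUa
  set Ub : LaurentPolynomial F := ∏ j ∈ S, Ul F (b j) with hUb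
  refine ⟨Ua * toLaurent ((Polynomial.X - Polynomial.C ζ) ^ (Ma - Mb) * A0),
    Ub * toLaurent B0, ?_, ?_⟩
  · rw [laurentEval_eq ζ hζ0, map_mul, evalHom_toLaurent]
    refine mul_ne_zero ?_ hB0ζ
    rw [hUb, map_prod]
    exact Finset.prod_ne_zero_iff.2 fun j hj => evalHom_Ul_ne_zero ζ hζ0 (b j)
  · have hLa : ∏ j ∈ S, lgauss F (a j) = ratHom F Ua * algebraMap F[X] (RatFunc F) A := by
      rw [hUa, hAdef, map_prod, map_prod, ← Finset.prod_mul_distrib]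
      exact Finset.prod_congr rfl fun j hj => lgauss_eq _ (ha j hj)
    have hLb : ∏ j ∈ S, lgauss F (b j) = ratHom F Ub * algebraMap F[X] (RatFunc F) B := by
      rw [hUb, hBdef, map_prod, map_prod, ← Finset.prod_mul_distrib]
      exact Finset.prod_congr rfl fun j hj => lgauss_eq _ (hb j hj)
    rw [hLa, hLb, laurentToRatFunc_eq, laurentToRatFunc_eq]
    simp only [map_mul, map_pow, ratHom_toLaurent]
    rw [← hAfact, ← hBfact]
    have hy : algebraMap F[X] (RatFunc F) (Polynomial.X - Polynomial.C ζ) ≠ 0 :=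
      RatFunc.algebraMap_ne_zero (Polynomial.X_sub_C_ne_zero ζ)
    have hB0ne : B0 ≠ 0 := fun h => hB0ζ (by rw [h]; simp)
    have hb0 : algebraMap F[X] (RatFunc F) B0 ≠ 0 := RatFunc.algebraMap_ne_zero hB0ne
    have hub : ratHom F Ub ≠ 0 := by
      rw [hUb, map_prod]
      exact Finset.prod_ne_zero_iff.2 fun j hj => ratHom_Ul_ne_zero (b j)
    simp only [map_mul, map_pow]
    have hpow : algebraMap F[X] (RatFunc F) (Polynomial.X - Polynomial.C ζ) ^ Ma =
        algebraMap F[X] (RatFunc F) (Polynomial.X - Polynomial.C ζ) ^ (Ma - Mb) *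
        algebraMap F[X] (RatFunc F) (Polynomial.X - Polynomial.C ζ) ^ Mb := by
      rw [← pow_add, Nat.sub_add_cancel hMba]
    rw [hpow]
    have hyp : algebraMap F[X] (RatFunc F) (Polynomial.X - Polynomial.C ζ) ^ Mb ≠ 0 :=
      pow_ne_zero _ hy
    have hw : (RatFunc.X - RatFunc.C ζ : RatFunc F) ≠ 0 := by
      simpa [map_sub, RatFunc.algebraMap_X, RatFunc.algebraMap_eq_C] using hy
    have hwp : ((RatFunc.X - RatFunc.C ζ : RatFunc F)) ^ Mb ≠ 0 := pow_ne_zero _ hw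
    field_simp
end

section
/- Let F be a field of characteristic p > 0 containing a primitive e-th root of unity ζ (e > 1). Suppose a = x·e·p^k and b = y·e·p^l are positive integers with p ∤ x, p ∤ y and k ≥ l. Then in the field of rational functions F(q), the ratio [a]_q/[b]_q equals (1 + q^{ep^l} + ⋯ + q^{(xp^{k-l}−1)ep^l}) / (1 + q^{ep^l} + ⋯ + q^{(y−1)ep^l}), and the denominator polynomial does not vanish at q = ζ. -/
lemma ratfunc_X_pow_ne_one (F : Type*) [Field F] {n : ℕ} (hn : 0 < n) :
    (RatFunc.X : RatFunc F) ^ n ≠ 1 := by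
  have : (RatFunc.X : RatFunc F) ^ n = algebraMap (Polynomial F) _ (Polynomial.X ^ n) := by
    simp [RatFunc.algebraMap_X]
  rw [this]
  intro h
  have h1 : (algebraMap (Polynomial F) (RatFunc F)) (Polynomial.X ^ n) =
      algebraMap (Polynomial F) (RatFunc F) 1 := by simpa using h
  have := RatFunc.algebraMap_injective F h1
  have hd := congrArg Polynomial.natDegree this
  simp [Polynomial.natDegree_X_pow] at hd
  omega

/-- key computational step of Lemma 3.12 of the paper. -/
theorem gaussian_ratio_step (F : Type*) [Field F] (p e : ℕ) [Fact p.Prime] [CharP F p]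
    (he : 1 < e) (ζ : F) (hζ : IsPrimitiveRoot ζ e)
    (x y k l a b : ℕ) (hx : 0 < x) (hy : 0 < y)
    (hpx : ¬ p ∣ x) (hpy : ¬ p ∣ y) (hkl : l ≤ k)
    (hab : a = x * e * p ^ k) (hbb : b = y * e * p ^ l) :
    (∑ i ∈ Finset.range a, (RatFunc.X : RatFunc F) ^ i) /
        (∑ i ∈ Finset.range b, (RatFunc.X : RatFunc F) ^ i) =
      (∑ i ∈ Finset.range (x * p ^ (k - l)), (RatFunc.X : RatFunc F) ^ (e * p ^ l * i)) /
        (∑ i ∈ Finset.range y, (RatFunc.X : RatFunc F) ^ (e * p ^ l * i)) ∧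
    Polynomial.eval ζ
        (∑ i ∈ Finset.range y, (Polynomial.X : Polynomial F) ^ (e * p ^ l * i)) ≠ 0 := by
  have hp : 0 < p := (Fact.out : p.Prime).pos
  have he0 : 0 < e := by omega
  have hd : 0 < e * p ^ l := Nat.mul_pos he0 (pow_pos hp l)
  have ha : a = (e * p ^ l) * (x * p ^ (k - l)) := by
    have hpk : p ^ k = p ^ l * p ^ (k - l) := by
      rw [← pow_add]; congr 1; omega
    rw [hab, hpk]; ring
  have hb : b = (e * p ^ l) * y := by rw [hbb]; ring
  have ha0 : 0 < a := by
    rw [ha]; exact Nat.mul_pos hd (Nat.mul_pos hx (pow_pos hp _))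
  have hb0 : 0 < b := by rw [hb]; exact Nat.mul_pos hd hy
  constructor
  · have hX : (RatFunc.X : RatFunc F) ≠ 1 := by
      simpa using ratfunc_X_pow_ne_one F (n := 1) one_pos
    have hXd : (RatFunc.X : RatFunc F) ^ (e * p ^ l) ≠ 1 := ratfunc_X_pow_ne_one F hd
    have key : ∀ i : ℕ, (RatFunc.X : RatFunc F) ^ (e * p ^ l * i) =
        ((RatFunc.X : RatFunc F) ^ (e * p ^ l)) ^ i := fun i => pow_mul _ _ _
    simp only [key]
    rw [geom_sum_eq hX, geom_sum_eq hX, geom_sum_eq hXd, geom_sum_eq hXd,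
      ← pow_mul, ← pow_mul, ← ha, ← hb]
    have h1 : (RatFunc.X : RatFunc F) - 1 ≠ 0 := sub_ne_zero.mpr hX
    have h2 : (RatFunc.X : RatFunc F) ^ (e * p ^ l) - 1 ≠ 0 := sub_ne_zero.mpr hXd
    have hXb : (RatFunc.X : RatFunc F) ^ b - 1 ≠ 0 :=
      sub_ne_zero.mpr (ratfunc_X_pow_ne_one F hb0)
    field_simp
  · have hev : ∀ i : ℕ, ζ ^ (e * p ^ l * i) = 1 := by
      intro i
      rw [mul_assoc, pow_mul, hζ.pow_eq_one, one_pow]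
    have : Polynomial.eval ζ
        (∑ i ∈ Finset.range y, (Polynomial.X : Polynomial F) ^ (e * p ^ l * i)) = (y : F) := by
      simp [Polynomial.eval_finset_sum, hev]
    rw [this]
    exact fun h => hpy ((CharP.cast_eq_zero_iff F p y).mp h)
end

section
/- Let K, γ, m be positive integers. For an integer l write l = l*·m + l' with 0 ≤ l' < m (so l' = l mod m). Let C = −K. For 0 ≤ X ≤ γ, let M_X be the multiset {1, 2, …, X} ∪ {K, K+1, …, K+γ−X−1} and let N(X) be the number of elements of M_X divisible by m. Then N(X) = max{0, ⌈(γ − C')/m⌉} if X' < (γ+K)', and N(X) = max{0, ⌊(γ − C')/m⌋} if X' ≥ (γ+K)', where C' = (−K) mod m, X' = X mod m, and (γ+K)' = (γ+K) mod m. -/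
set_option maxHeartbeats 1000000

lemma count_Ioc_dvd (m a b : ℕ) (h : a ≤ b) :
    ((Finset.Ioc a b).filter (fun x => m ∣ x)).card = b / m - a / m := by
  have hu : Finset.Ioc 0 a ∪ Finset.Ioc a b = Finset.Ioc 0 b :=
    Finset.Ioc_union_Ioc_eq_Ioc (Nat.zero_le a) h
  have hd : Disjoint (Finset.Ioc 0 a) (Finset.Ioc a b) := by
    rw [Finset.disjoint_left]
    intro x hx hx'
    simp only [Finset.mem_Ioc] at hx hx'
    omega
  have hcard : ((Finset.Ioc 0 a).filter (fun x => m ∣ x)).card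
      + ((Finset.Ioc a b).filter (fun x => m ∣ x)).card
      = ((Finset.Ioc 0 b).filter (fun x => m ∣ x)).card := by
    rw [← Finset.card_union_of_disjoint (Finset.disjoint_filter_filter hd),
      ← Finset.filter_union, hu]
  have h1 := Nat.Ioc_filter_dvd_card_eq_div a m
  have h2 := Nat.Ioc_filter_dvd_card_eq_div b m
  omega

/-- Lemma 3.13 ('CMgamma1') of the paper, a counting lemma about
multiples of `m` in the multiset `{1,…,X} ∪ {K,…,K+γ−X−1}`. -/
theorem cm_gamma_one (K γ m : ℕ) (hK : 0 < K) (hγ : 0 < γ) (hm : 0 < m)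
    (X : ℕ) (hX : X ≤ γ) :
    ((((Finset.Icc 1 X).val + (Finset.Icc K (K + γ - X - 1)).val).filter
        (fun x => m ∣ x)).card : ℤ) =
      if (X : ℤ) % m < ((γ : ℤ) + K) % m then
        max 0 ⌈(((γ : ℤ) - (-(K : ℤ)) % m : ℤ) : ℚ) / (m : ℚ)⌉
      else
        max 0 ⌊(((γ : ℤ) - (-(K : ℤ)) % m : ℤ) : ℚ) / (m : ℚ)⌋ := by
  -- Step 1: compute the multiset count as a sum of two Finset counts
  have hsplit : (((Finset.Icc 1 X).val + (Finset.Icc K (K + γ - X - 1)).val).filter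
        (fun x => m ∣ x)).card
      = ((Finset.Icc 1 X).filter (fun x => m ∣ x)).card
        + ((Finset.Icc K (K + γ - X - 1)).filter (fun x => m ∣ x)).card := by
    rw [Multiset.filter_add, Multiset.card_add]; rfl
  have hIcc1 : Finset.Icc 1 X = Finset.Ioc 0 X := Finset.Icc_add_one_left_eq_Ioc 0 X
  have hIcc2 : Finset.Icc K (K + γ - X - 1) = Finset.Ioc (K - 1) (K + γ - X - 1) := by
    have : K = (K - 1) + 1 := by omega
    rw [this]; exact Finset.Icc_add_one_left_eq_Ioc _ _
  have hc1 : ((Finset.Icc 1 X).filter (fun x => m ∣ x)).card = X / m := by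
    rw [hIcc1]
    exact Nat.Ioc_filter_dvd_card_eq_div X m
  have hc2 : ((Finset.Icc K (K + γ - X - 1)).filter (fun x => m ∣ x)).card
      = (K + γ - X - 1) / m - (K - 1) / m := by
    rw [hIcc2]; exact count_Ioc_dvd m (K - 1) (K + γ - X - 1) (by omega)
  rw [hsplit, hc1, hc2]
  -- Step 2: cast everything to ℤ
  have hmz : 0 < (m : ℤ) := by exact_mod_cast hm
  have hmne : (m : ℤ) ≠ 0 := ne_of_gt hmz
  set C : ℤ := (-(K : ℤ)) % m with hCdef
  set G : ℤ := ((γ : ℤ) + K) % m with hGdef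
  set a : ℤ := (X : ℤ) % m with hadef
  have hC0 : 0 ≤ C := Int.emod_nonneg _ hmne
  have hC1 : C < m := Int.emod_lt_of_pos _ hmz
  have hG0 : 0 ≤ G := Int.emod_nonneg _ hmne
  have hG1 : G < m := Int.emod_lt_of_pos _ hmz
  have ha0 : 0 ≤ a := Int.emod_nonneg _ hmne
  have ha1 : a < m := Int.emod_lt_of_pos _ hmz
  obtain ⟨k, hk⟩ : (m : ℤ) ∣ ((K : ℤ) + C) := by
    refine ⟨-((-(K : ℤ)) / m), ?_⟩
    have := Int.emod_add_mul_ediv (-(K : ℤ)) m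
    rw [hCdef]; linarith
  set t : ℤ := ((γ : ℤ) - C) / m with htdef
  have hGC : ((γ : ℤ) - C) % m = G := by
    rw [hGdef, Int.emod_eq_emod_iff_emod_sub_eq_zero]
    have h : (γ : ℤ) - C - ((γ : ℤ) + K) = m * (-k) := by linarith
    rw [h, Int.mul_emod_right]
  have ht : (γ : ℤ) - C = m * t + G := by
    have := Int.mul_ediv_add_emod ((γ : ℤ) - C) m
    rw [hGC] at this; linarith
  set qX : ℤ := (X : ℤ) / m with hqXdef
  have hXq : (X : ℤ) = m * qX + a := by
    have := Int.mul_ediv_add_emod (X : ℤ) m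
    linarith
  have hK1 : ((K : ℤ) - 1) / m = k - 1 :=
    ((Int.ediv_emod_unique (r := (m : ℤ) - 1 - C) hmz).2
      ⟨by linarith, by linarith, by linarith⟩).1
  -- cast the nat divisions
  have hcast1 : ((X / m : ℕ) : ℤ) = qX := by
    rw [hqXdef, Int.natCast_div]
  have hle : (K - 1) / m ≤ (K + γ - X - 1) / m := Nat.div_le_div_right (by omega)
  have hcastK : ((K - 1 : ℕ) : ℤ) = (K : ℤ) - 1 := by omega
  have hcastB : ((K + γ - X - 1 : ℕ) : ℤ) = (K : ℤ) + γ - X - 1 := by omega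
  have hcast2 : (((K + γ - X - 1) / m - (K - 1) / m : ℕ) : ℤ)
      = ((K : ℤ) + γ - X - 1) / m - (k - 1) := by
    rw [Nat.cast_sub hle, Int.natCast_div, Int.natCast_div, hcastK, hcastB, hK1]
  push_cast [hcast1]
  rw [show (((K + γ - X - 1) / m - (K - 1) / m : ℕ) : ℤ)
      = ((K : ℤ) + γ - X - 1) / m - (k - 1) from hcast2]
  by_cases hcase : a < G
  · -- ceil branch
    rw [if_pos hcase]
    have hB : ((K : ℤ) + γ - X - 1) / m = t + k - qX :=
      ((Int.ediv_emod_unique (r := G - 1 - a) hmz).2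
        ⟨by linarith, by linarith, by linarith⟩).1
    have hGpos : 0 < G := lt_of_le_of_lt ha0 hcase
    have hceil : ⌈((((γ : ℤ) - C : ℤ)) : ℚ) / (m : ℚ)⌉ = t + 1 := by
      have h1 : ((((γ : ℤ) - C : ℤ)) : ℚ) / (m : ℚ)
          = -(((-((γ : ℤ) - C) : ℤ) : ℚ) / (m : ℚ)) := by push_cast; ring
      rw [h1, Int.ceil_neg, Rat.floor_intCast_div_natCast]
      have h2 : (-((γ : ℤ) - C)) / (m : ℤ) = -t - 1 :=
        ((Int.ediv_emod_unique (r := (m : ℤ) - G) hmz).2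
          ⟨by linarith, by linarith, by linarith⟩).1
      rw [h2]; ring
    have hq : ((γ : ℚ) - (C : ℚ)) / (m : ℚ) = ((((γ : ℤ) - C : ℤ)) : ℚ) / (m : ℚ) := by
      push_cast; ring
    rw [hq, hceil, hB]
    have hγz : (1 : ℤ) ≤ (γ : ℤ) := by exact_mod_cast hγ
    have htge : 0 ≤ t + 1 := by nlinarith
    rw [max_eq_right htge]; ring
  · -- floor branch
    rw [if_neg hcase]
    push_neg at hcase
    have hB : ((K : ℤ) + γ - X - 1) / m = t + k - qX - 1 :=
      ((Int.ediv_emod_unique (r := G - 1 - a + m) hmz).2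
        ⟨by linarith, by linarith, by linarith⟩).1
    have hfloor : ⌊((((γ : ℤ) - C : ℤ)) : ℚ) / (m : ℚ)⌋ = t := by
      rw [Rat.floor_intCast_div_natCast]
    have hq : ((γ : ℚ) - (C : ℚ)) / (m : ℚ) = ((((γ : ℤ) - C : ℤ)) : ℚ) / (m : ℚ) := by
      push_cast; ring
    rw [hq, hfloor, hB]
    have hL : qX + (t + k - qX - 1 - (k - 1)) = t := by ring
    have hnn : 0 ≤ qX + (t + k - qX - 1 - (k - 1)) := by
      have h1 : (0 : ℤ) ≤ ((X / m : ℕ) : ℤ) := Int.ofNat_nonneg _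
      have h2 : (0 : ℤ) ≤ (((K + γ - X - 1) / m - (K - 1) / m : ℕ) : ℤ) := Int.ofNat_nonneg _
      rw [hcast1] at h1
      rw [hcast2, hB] at h2
      linarith
    rw [max_eq_right (hL ▸ hnn)]; ring
end

section
/- Let p be a prime, e > 1, γ > 0, C < 0 integers. For 0 ≤ X ≤ γ let M_X be the multiset {1, 2, …, X} ∪ {C, C−1, …, C−γ+X+1}, and for i ≥ 0 let N(X)_i = #{x ∈ M_X : ν_{e,p}(x) ≥ i}, where ν_{e,p}(x) = 0 if e ∤ x and ν_{e,p}(x) = 1 + ν_p(x/e) otherwise. Then there exists β with 0 ≤ β ≤ γ such that N(β)_i ≤ N(X)_i for all 0 ≤ X ≤ γ and all i ≥ 0. -/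
open Finset

lemma nuep_ge_succ_iff (p e : ℕ) (hp : p.Prime) (x : ℤ) (hx : x ≠ 0) (i : ℕ) :
    (i + 1 ≤ nuep e p x) ↔ ((e : ℤ) * (p : ℤ) ^ i ∣ x) := by
  haveI : Fact p.Prime := ⟨hp⟩
  unfold nuep
  by_cases hd : (e : ℤ) ∣ x
  · rw [if_pos hd, ← Int.dvd_div_iff_mul_dvd hd]
    have hq : x / e ≠ 0 := fun h => hx (by rw [← Int.ediv_mul_cancel hd, h, zero_mul])
    rw [padicValInt_dvd_iff]
    simp [hq]
    omega
  · rw [if_neg hd]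
    constructor
    · omega
    · intro h
      exact absurd (dvd_trans (Dvd.intro _ rfl) h) hd

lemma count_mult (D : ℕ) (hD : 0 < D) (a b : ℤ) :
    ((Finset.Ioc a b).filter (fun x => (D : ℤ) ∣ x)).card = (b / D - a / D).toNat := by
  have h := Int.Ioc_filter_dvd_card a b (by exact_mod_cast hD : (0:ℤ) < (D:ℤ))
  rw [show ((D : ℤ) : ℚ) = ((D : ℕ) : ℚ) by push_cast; ring] at h
  rw [Rat.floor_intCast_div_natCast, Rat.floor_intCast_div_natCast] at h
  omega

lemma ediv_shift (m L : ℤ) (hm : m ≠ 0) (Y : ℤ) :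
    Y / m - (Y - L) / m = -((Y % m - L) / m) := by
  conv_lhs => rw [show Y - L = (Y % m - L) + (Y / m) * m by rw [Int.emod_def]; ring]
  rw [Int.add_mul_ediv_right _ _ hm]
  ring

lemma ediv_res (m L : ℤ) (hm : 0 < m) (r : ℤ) (h0 : 0 ≤ r) (hr : r < m) :
    (r - L) / m = (if r < L % m then -(L / m) - 1 else -(L / m)) := by
  have hL0 : 0 ≤ L % m := Int.emod_nonneg L hm.ne'
  have hLm : L % m < m := Int.emod_lt_of_pos L hm
  by_cases hc : r < L % m
  · rw [if_pos hc]
    rw [show r - L = (r - L % m + m) + (-(L / m) - 1) * m by rw [Int.emod_def]; ring,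
      Int.add_mul_ediv_right _ _ hm.ne', Int.ediv_eq_zero_of_lt (by omega) (by omega)]
    ring
  · rw [if_neg hc]
    rw [show r - L = (r - L % m) + (-(L / m)) * m by rw [Int.emod_def]; ring,
      Int.add_mul_ediv_right _ _ hm.ne', Int.ediv_eq_zero_of_lt (by omega) (by omega)]
    ring

lemma key_ineq (m L : ℤ) (hm : 0 < m) (γ : ℕ) (hL : (γ:ℤ) < L) (β X : ℕ) (hβ : β ≤ γ)
    (hX : X ≤ γ) (hgood : L % m ≤ γ → (β:ℤ) % m = L % m) :
    (β:ℤ)/m - ((β:ℤ) - L)/m ≤ (X:ℤ)/m - ((X:ℤ) - L)/m := by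
  rw [ediv_shift m L hm.ne', ediv_shift m L hm.ne']
  have hL0 : 0 ≤ L % m := Int.emod_nonneg L hm.ne'
  have hLm : L % m < m := Int.emod_lt_of_pos L hm
  have hβ0 : (0:ℤ) ≤ (β:ℤ) % m := Int.emod_nonneg _ hm.ne'
  have hβm : (β:ℤ) % m < m := Int.emod_lt_of_pos _ hm
  have hX0 : (0:ℤ) ≤ (X:ℤ) % m := Int.emod_nonneg _ hm.ne'
  have hXm : (X:ℤ) % m < m := Int.emod_lt_of_pos _ hm
  rw [ediv_res m L hm _ hβ0 hβm, ediv_res m L hm _ hX0 hXm]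
  by_cases hcase : L % m ≤ (γ:ℤ)
  · rw [hgood hcase]
    split_ifs <;> linarith
  · have hmγ : (γ:ℤ) < m := by omega
    have h1 : (β:ℤ) % m = β := Int.emod_eq_of_lt (by positivity) (by
      exact lt_of_le_of_lt (by exact_mod_cast hβ) hmγ)
    have h2 : (X:ℤ) % m = X := Int.emod_eq_of_lt (by positivity) (by
      exact lt_of_le_of_lt (by exact_mod_cast hX) hmγ)
    rw [h1, h2]
    have : (β:ℤ) < L % m := by omega
    have : (X:ℤ) < L % m := by omega
    split_ifs <;> linarith

lemma exists_beta (e p : ℕ) (hp : p.Prime) (he : 0 < e) (γ : ℕ) (L : ℤ) (hL : (γ:ℤ) < L) :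
    ∃ β : ℕ, β ≤ γ ∧ ∀ j : ℕ, L % ((e:ℤ) * (p:ℤ)^j) ≤ γ →
      (β:ℤ) % ((e:ℤ) * (p:ℤ)^j) = L % ((e:ℤ) * (p:ℤ)^j) := by
  have hmpos : ∀ j : ℕ, (0:ℤ) < (e:ℤ) * (p:ℤ)^j := by
    intro j
    have := hp.two_le
    positivity
  have hbound : ∀ j : ℕ, L % ((e:ℤ) * (p:ℤ)^j) ≤ γ → j ≤ L.toNat := by
    intro j hj
    by_contra hc
    push_neg at hc
    have h1 : L < (e:ℤ) * (p:ℤ)^j := by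
      have h2 : L.toNat < 2^j := lt_of_lt_of_le hc (Nat.le_of_lt (Nat.lt_two_pow_self (n := j)))
      have h3 : (2:ℤ)^j ≤ (e:ℤ) * (p:ℤ)^j := by
        have : (2:ℤ) ≤ (p:ℤ) := by exact_mod_cast hp.two_le
        have h4 : (2:ℤ)^j ≤ (p:ℤ)^j := pow_le_pow_left₀ (by norm_num) this j
        have h5 : (1:ℤ) ≤ (e:ℤ) := by exact_mod_cast he
        nlinarith [pow_pos (show (0:ℤ) < 2 by norm_num) j]
      have h6 : L < (2:ℤ)^j := by
        have : (L.toNat : ℤ) = L := Int.toNat_of_nonneg (by omega)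
        calc L = (L.toNat : ℤ) := this.symm
          _ < ((2^j : ℕ) : ℤ) := by exact_mod_cast h2
          _ = (2:ℤ)^j := by push_cast; ring
      omega
    rw [Int.emod_eq_of_lt (by omega) h1] at hj
    omega
  by_cases hJ : L % ((e:ℤ) * (p:ℤ)^(Nat.findGreatest
      (fun j => L % ((e:ℤ) * (p:ℤ)^j) ≤ γ) L.toNat)) ≤ γ
  · set J := Nat.findGreatest (fun j => L % ((e:ℤ) * (p:ℤ)^j) ≤ γ) L.toNat with hJdef
    refine ⟨(L % ((e:ℤ) * (p:ℤ)^J)).toNat, by omega, ?_⟩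
    intro j hj
    have hjJ : j ≤ J := Nat.le_findGreatest (hbound j hj) hj
    have hdvd : (e:ℤ) * (p:ℤ)^j ∣ (e:ℤ) * (p:ℤ)^J :=
      mul_dvd_mul_left _ (pow_dvd_pow _ hjJ)
    have hcast : ((L % ((e:ℤ) * (p:ℤ)^J)).toNat : ℤ) = L % ((e:ℤ) * (p:ℤ)^J) :=
      Int.toNat_of_nonneg (Int.emod_nonneg L (hmpos J).ne')
    rw [hcast, Int.emod_emod_of_dvd L hdvd]
  · refine ⟨0, Nat.zero_le _, ?_⟩
    intro j hj
    have := Nat.findGreatest_spec (P := fun j => L % ((e:ℤ) * (p:ℤ)^j) ≤ γ)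
      (hbound j hj) hj
    exact absurd this hJ

lemma card_formula (p e : ℕ) (hp : p.Prime) (he : 1 < e) (γ : ℕ) (C : ℤ) (hC : C < 0)
    (X : ℕ) (j : ℕ) :
    ((((Finset.Icc 1 X).val.map (fun x : ℕ => (x : ℤ))) +
        (Finset.Icc (C - γ + X + 1) C).val).filter
        (fun x => j + 1 ≤ nuep e p x)).card =
      X / (e * p ^ j) +
        (C / ((e:ℤ) * (p:ℤ)^j) - (C - γ + X) / ((e:ℤ) * (p:ℤ)^j)).toNat := by
  have hppos := hp.two_le
  have hm : (0:ℤ) < (e:ℤ) * (p:ℤ)^j := by positivity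
  set m : ℤ := (e:ℤ) * (p:ℤ)^j with hmdef
  set M1 : Multiset ℤ := (Finset.Icc 1 X).val.map (fun x : ℕ => (x : ℤ)) with hM1
  set M2 : Multiset ℤ := (Finset.Icc (C - γ + X + 1) C).val with hM2
  have hcong : (M1 + M2).filter (fun x => j + 1 ≤ nuep e p x)
      = (M1 + M2).filter (fun x => m ∣ x) := by
    apply Multiset.filter_congr
    intro x hx
    have hx0 : x ≠ 0 := by
      rcases Multiset.mem_add.1 hx with h | h
      · obtain ⟨n, hn, rfl⟩ := Multiset.mem_map.1 h
        have h1 := (Finset.mem_Icc.1 (Finset.mem_def.2 hn)).1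
        simp only [ne_eq, Int.natCast_eq_zero]
        omega
      · rw [hM2] at h
        have h2 := (Finset.mem_Icc.1 (Finset.mem_def.2 h)).2
        omega
    exact nuep_ge_succ_iff p e hp x hx0 j
  rw [hcong, Multiset.filter_add, Multiset.card_add]
  have p1 : (M1.filter (fun x => m ∣ x)).card = X / (e * p ^ j) := by
    rw [hM1, Multiset.filter_map, Multiset.card_map]
    have hpred : Multiset.filter ((fun x : ℤ => m ∣ x) ∘ (fun n : ℕ => (n:ℤ)))
          (Finset.Icc 1 X).val
        = Multiset.filter (fun n : ℕ => (e * p ^ j) ∣ n) (Finset.Icc 1 X).val := by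
      apply Multiset.filter_congr
      intro n _
      simp only [Function.comp]
      rw [hmdef, show ((e:ℤ) * (p:ℤ)^j) = ((e*p^j : ℕ):ℤ) from by push_cast; ring]
      exact Int.natCast_dvd_natCast
    rw [hpred]
    rw [← Finset.filter_val]
    show (Finset.filter _ (Finset.Icc 1 X)).card = _
    rw [show Finset.Icc 1 X = Finset.Ioc 0 X from by ext y; simp; omega]
    simpa using Nat.Ioc_filter_dvd_card_eq_div X (e*p^j)
  have p2 : (M2.filter (fun x => m ∣ x)).card = (C / m - (C - γ + X) / m).toNat := by
    rw [hM2, ← Finset.filter_val]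
    show (Finset.filter _ _).card = _
    rw [show Finset.Icc (C - γ + X + 1) C = Finset.Ioc (C - γ + X) C from by
      ext y; simp only [Finset.mem_Icc, Finset.mem_Ioc]; omega]
    rw [show m = ((e*p^j : ℕ):ℤ) from by rw [hmdef]; push_cast; ring]
    exact count_mult (e*p^j) (by positivity) _ _
  rw [p1, p2]


/-- Corollary 3.15 of the paper. -/
theorem cm_gamma_three (p e : ℕ) (hp : p.Prime) (he : 1 < e)
    (γ : ℕ) (hγ : 0 < γ) (C : ℤ) (hC : C < 0) :
    ∃ β ≤ γ, ∀ X ≤ γ, ∀ i : ℕ,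
      ((((Finset.Icc 1 β).val.map (fun x : ℕ => (x : ℤ))) +
          (Finset.Icc (C - γ + β + 1) C).val).filter
          (fun x => i ≤ nuep e p x)).card ≤
        ((((Finset.Icc 1 X).val.map (fun x : ℕ => (x : ℤ))) +
          (Finset.Icc (C - γ + X + 1) C).val).filter
          (fun x => i ≤ nuep e p x)).card := by
  obtain ⟨β, hβγ, hβ⟩ := exists_beta e p hp (by omega) γ ((γ:ℤ) - C) (by omega)
  refine ⟨β, hβγ, ?_⟩
  intro X hX i
  cases i with
  | zero =>
    have hcount : ∀ Y : ℕ, Y ≤ γ →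
        ((((Finset.Icc 1 Y).val.map (fun x : ℕ => (x : ℤ))) +
          (Finset.Icc (C - γ + Y + 1) C).val).filter
          (fun x => 0 ≤ nuep e p x)).card = γ := by
      intro Y hY
      rw [Multiset.filter_eq_self.2 (fun x _ => Nat.zero_le _)]
      rw [Multiset.card_add, Multiset.card_map]
      have h1 : (Finset.Icc 1 Y).val.card = Y := by
        show (Finset.Icc 1 Y).card = Y
        rw [Nat.card_Icc]
        omega
      have h2 : (Finset.Icc (C - γ + Y + 1) C).val.card = γ - Y := by
        show (Finset.Icc (C - γ + Y + 1) C).card = γ - Y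
        rw [Int.card_Icc]
        omega
      omega
    rw [hcount β hβγ, hcount X hX]
  | succ j =>
    rw [card_formula p e hp he γ C hC β j, card_formula p e hp he γ C hC X j]
    have hppos := hp.two_le
    have hm : (0:ℤ) < (e:ℤ) * (p:ℤ)^j := by positivity
    set m : ℤ := (e:ℤ) * (p:ℤ)^j with hmdef
    set L : ℤ := (γ:ℤ) - C with hLdef
    have hkey := key_ineq m L hm γ (by omega) β X hβγ hX (hβ j)
    have hDm : ((e * p ^ j : ℕ) : ℤ) = m := by push_cast; ring
    have hb1 : (0:ℤ) ≤ C / m - (C - γ + β) / m :=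
      sub_nonneg.2 (Int.ediv_le_ediv hm (by omega))
    have hb2 : (0:ℤ) ≤ C / m - (C - γ + X) / m :=
      sub_nonneg.2 (Int.ediv_le_ediv hm (by omega))
    have e1 : C - (γ:ℤ) + β = (β:ℤ) - L := by omega
    have e2 : C - (γ:ℤ) + X = (X:ℤ) - L := by omega
    zify
    rw [Int.toNat_of_nonneg hb1, Int.toNat_of_nonneg hb2]
    rw [e1, e2, ← hmdef]
    linarith [hkey]
end

section
/- Let S_n be the symmetric group and let T_w (w ∈ S_n) be the standard basis of the generic Iwahori-Hecke algebra H_n over ℤ[q, q^{-1}]. Fix 1 ≤ u ≤ v ≤ n and π ∈ S_n, and let T_{u,v} = T_u T_{u+1} ⋯ T_{v−1}. Let D(u,v,π) be the set of tuples p = (p_0, p_1, …, p_ε) with u − 1 = p_0 < p_1 < ⋯ < p_ε = v and π(p_1) > π(p_2) > ⋯ > π(p_ε). For each such p, let p̌ be the permutation (p_1, p_1−1, …, p_0+1)(p_2, p_2−1, …, p_1+1) ⋯ (p_ε, p_ε−1, …, p_{ε−1}+1), set ℓ(p) = ε − 1, and b(p) = ∑_{i=0}^{ε−1} #{j : p_i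 < j < p_{i+1} and π(j) > π(p_{i+1})}. Then T_{u,v} T_π = ∑_{p ∈ D(u,v,π)} q^{b(p)} (q − 1)^{ℓ(p)} T_{p̌ π}. -/
/-- The cycle `(a, a−1, …, b)` (mapping `x ↦ x−1` for `b < x ≤ a` and `b ↦ a`),
written as a product of adjacent transpositions; the identity if `a ≤ b`. -/
def cyc (b a : ℕ) : Equiv.Perm ℕ :=
  (((List.range' b (a - b)).reverse).map (fun i => Equiv.swap i (i + 1))).prod

/-- The predecessor of `x` in `A`, with default `u - 1`. -/
def prevIn (u : ℕ) (A : Finset ℕ) (x : ℕ) : ℕ :=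
  ((A.filter (· < x)).max).unbotD (u - 1)

/-- The permutation `p̌` associated to the tuple `u−1 = p₀ < p₁ < ⋯ < p_ε = v`
whose nonempty part is recorded by the finset `A = {p₁, …, p_ε}`:
`p̌ = (p₁,…,p₀+1)(p₂,…,p₁+1)⋯(p_ε,…,p_{ε−1}+1)` (a product of disjoint cycles). -/
def pcheck (u : ℕ) (A : Finset ℕ) : Equiv.Perm ℕ :=
  ((A.sort (· ≤ ·)).map (fun x => cyc (prevIn u A x + 1) x)).prod

/-- `b(p) = ∑_i #{j : p_i < j < p_{i+1} and π(j) > π(p_{i+1})}`. -/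
def bval (u : ℕ) (π : Equiv.Perm ℕ) (A : Finset ℕ) : ℕ :=
  ∑ x ∈ A, ((Finset.Ioo (prevIn u A x) x).filter (fun j => π x < π j)).card

lemma listprod_fix (l : List (Equiv.Perm ℕ)) (x : ℕ) (h : ∀ f ∈ l, f x = x) :
    l.prod x = x := by
  induction l with
  | nil => rfl
  | cons f l ih =>
    rw [List.prod_cons, Equiv.Perm.mul_apply, ih (fun g hg => h g (List.mem_cons_of_mem f hg)),
      h f (List.mem_cons_self)]

lemma cyc_fix {b a x : ℕ} (h : x < b ∨ a < x) : cyc b a x = x := by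
  apply listprod_fix
  intro f hf
  simp only [List.mem_map, List.mem_reverse, List.mem_range'_1] at hf
  obtain ⟨i, ⟨hi1, hi2⟩, rfl⟩ := hf
  apply Equiv.swap_apply_of_ne_of_ne <;> omega

lemma cyc_eq_one {b a : ℕ} (h : a ≤ b) : cyc b a = 1 := by
  unfold cyc
  rw [Nat.sub_eq_zero_of_le h]
  rfl

lemma cyc_apply_base {b a : ℕ} (h : b ≤ a) : cyc b a b = a := by
  induction a, h using Nat.le_induction with
  | base => rw [cyc_eq_one le_rfl]; rfl
  | succ a hba ih =>
    have : a + 1 - b = (a - b) + 1 := by omega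
    unfold cyc
    rw [this, List.range'_concat, List.reverse_append, List.map_append, List.prod_append]
    simp only [List.reverse_cons, List.reverse_nil, List.nil_append, List.map_cons, List.map_nil,
      List.prod_cons, List.prod_nil, mul_one, one_mul]
    have hb : b + (a - b) = a := by omega
    rw [hb, Equiv.Perm.mul_apply]
    show Equiv.swap a (a+1) (cyc b a b) = a + 1
    rw [ih, Equiv.swap_apply_left]

lemma cyc_cons {b a : ℕ} (h : b < a) : cyc b a = cyc (b + 1) a * Equiv.swap b (b + 1) := by
  unfold cyc
  have : a - b = (a - (b + 1)) + 1 := by omega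
  rw [this, List.range'_succ, List.reverse_cons, List.map_append, List.prod_append]
  simp

lemma commute_swap {u : ℕ} {f : Equiv.Perm ℕ} (h1 : f u = u) (h2 : f (u + 1) = u + 1) :
    Equiv.swap u (u + 1) * f = f * Equiv.swap u (u + 1) := by
  ext x
  simp only [Equiv.Perm.mul_apply]
  rcases eq_or_ne x u with rfl | hxu
  · rw [h1, Equiv.swap_apply_left, h2]
  rcases eq_or_ne x (u + 1) with rfl | hxu1
  · rw [h2, Equiv.swap_apply_right, h1]
  · rw [Equiv.swap_apply_of_ne_of_ne hxu hxu1, Equiv.swap_apply_of_ne_of_ne]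
    · intro hc; exact hxu (f.injective (hc.trans h1.symm))
    · intro hc; exact hxu1 (f.injective (hc.trans h2.symm))

lemma prevIn_eq_max' {A : Finset ℕ} {x : ℕ} (h : (A.filter (· < x)).Nonempty) (u : ℕ) :
    prevIn u A x = (A.filter (· < x)).max' h := by
  unfold prevIn
  rw [← Finset.coe_max' h, WithBot.unbotD_coe]

lemma prevIn_of_empty {A : Finset ℕ} {x : ℕ} (h : A.filter (· < x) = ∅) (u : ℕ) :
    prevIn u A x = u - 1 := by
  unfold prevIn
  rw [h]
  rfl

lemma prevIn_congr {A : Finset ℕ} {x : ℕ} (h : (A.filter (· < x)).Nonempty) (u w : ℕ) :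
    prevIn u A x = prevIn w A x := by
  rw [prevIn_eq_max' h u, prevIn_eq_max' h w]

lemma le_prevIn {A : Finset ℕ} {x a : ℕ} (ha : a ∈ A) (hax : a < x) (u : ℕ) :
    a ≤ prevIn u A x := by
  have hne : (A.filter (· < x)).Nonempty := ⟨a, Finset.mem_filter.2 ⟨ha, hax⟩⟩
  rw [prevIn_eq_max' hne u]
  have hm : a ∈ A.filter (· < x) := Finset.mem_filter.2 ⟨ha, hax⟩
  exact Finset.le_max' _ a hm

lemma prevIn_ge {A : Finset ℕ} (u x : ℕ) (hA : ∀ a ∈ A, u - 1 ≤ a) :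
    u - 1 ≤ prevIn u A x := by
  rcases (A.filter (· < x)).eq_empty_or_nonempty with h | h
  · rw [prevIn_of_empty h u]
  · rw [prevIn_eq_max' h u]
    exact hA _ (Finset.mem_filter.1 (Finset.max'_mem _ h)).1

lemma prevIn_insert {u x : ℕ} {A : Finset ℕ} (hx : u < x) (hA : ∀ a ∈ A, u < a) :
    prevIn u (insert u A) x = prevIn (u + 1) A x := by
  have h2 : (insert u A).filter (· < x) = insert u (A.filter (· < x)) := by
    rw [Finset.filter_insert, if_pos hx]
  rcases (A.filter (· < x)).eq_empty_or_nonempty with h | h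
  · rw [prevIn_of_empty (by rw [h]) (u + 1)]
    unfold prevIn
    rw [h2, h]
    simp
  · rw [prevIn_eq_max' h (u + 1)]
    have hle : u ≤ (A.filter (· < x)).max' h :=
      ((hA _ (Finset.mem_filter.1 (Finset.max'_mem _ h)).1)).le
    unfold prevIn
    rw [h2, Finset.max_insert, ← Finset.coe_max' h, ← WithBot.coe_sup,
      WithBot.unbotD_coe, sup_eq_right.2 hle]

lemma sort_insert_min {a : ℕ} {A : Finset ℕ} (h : ∀ b ∈ A, a < b) :
    (insert a A).sort (· ≤ ·) = a :: A.sort (· ≤ ·) :=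
  Finset.sort_insert _ (fun b hb => (h b hb).le) (fun ha => lt_irrefl a (h a ha))

lemma sort_cons_min {A : Finset ℕ} (hne : A.Nonempty) :
    A.sort (· ≤ ·) = A.min' hne :: (A.erase (A.min' hne)).sort (· ≤ ·) := by
  conv_lhs => rw [← Finset.insert_erase (A.min'_mem hne)]
  exact sort_insert_min (fun b hb =>
    lt_of_le_of_ne (A.min'_le b (Finset.mem_of_mem_erase hb))
      (Ne.symm (Finset.ne_of_mem_erase hb)))

lemma pcheck_fix {w t : ℕ} {A : Finset ℕ} (ht : t < w) (hA : ∀ a ∈ A, w ≤ a) :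
    pcheck w A t = t := by
  apply listprod_fix
  intro f hf
  simp only [List.mem_map, Finset.mem_sort] at hf
  obtain ⟨x, hx, rfl⟩ := hf
  apply cyc_fix
  left
  have := prevIn_ge w x (fun a ha => by have := hA a ha; omega)
  omega

lemma filter_lt_min_eq_empty {A : Finset ℕ} (hne : A.Nonempty) :
    A.filter (· < A.min' hne) = ∅ := by
  apply Finset.filter_eq_empty_iff.2
  intro a ha
  exact not_lt.2 (A.min'_le a ha)

lemma pcheck_apply_min {w : ℕ} {A : Finset ℕ} (hw : 1 ≤ w) (hA : ∀ a ∈ A, w ≤ a)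
    (hne : A.Nonempty) : pcheck w A w = A.min' hne := by
  set m := A.min' hne with hm
  unfold pcheck
  rw [sort_cons_min hne, List.map_cons, List.prod_cons, Equiv.Perm.mul_apply]
  rw [listprod_fix]
  · rw [prevIn_of_empty (filter_lt_min_eq_empty hne) w]
    have hwm : w ≤ m := hA m (A.min'_mem hne)
    have : w - 1 + 1 = w := by omega
    rw [this]
    exact cyc_apply_base hwm
  · intro f hf
    simp only [List.mem_map, Finset.mem_sort] at hf
    obtain ⟨x, hx, rfl⟩ := hf
    apply cyc_fix
    left
    have hxA : x ∈ A := Finset.mem_of_mem_erase hx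
    have hmx : m < x := lt_of_le_of_ne (A.min'_le x hxA) (Ne.symm (Finset.ne_of_mem_erase hx))
    have := le_prevIn (A.min'_mem hne) hmx w
    have hwm : w ≤ m := hA m (A.min'_mem hne)
    omega

lemma pcheck_step {u : ℕ} {A : Finset ℕ} (hu : 1 ≤ u) (hA : ∀ a ∈ A, u + 1 ≤ a)
    (hne : A.Nonempty) :
    pcheck u A = pcheck (u + 1) A * Equiv.swap u (u + 1) := by
  set m := A.min' hne with hm
  have humem : u + 1 ≤ m := hA m (A.min'_mem hne)
  have hmapeq : ∀ x ∈ (A.erase m).sort (· ≤ ·),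
      cyc (prevIn u A x + 1) x = cyc (prevIn (u + 1) A x + 1) x := by
    intro x hx
    rw [Finset.mem_sort] at hx
    have hxA : x ∈ A := Finset.mem_of_mem_erase hx
    have hmx : m < x := lt_of_le_of_ne (A.min'_le x hxA) (Ne.symm (Finset.ne_of_mem_erase hx))
    rw [prevIn_congr ⟨m, Finset.mem_filter.2 ⟨A.min'_mem hne, hmx⟩⟩ u (u + 1)]
  have hfixP : ∀ t ≤ u + 1,
      (((A.erase m).sort (· ≤ ·)).map (fun x => cyc (prevIn u A x + 1) x)).prod t = t := by
    intro t htle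
    apply listprod_fix
    intro f hf
    simp only [List.mem_map, Finset.mem_sort] at hf
    obtain ⟨x, hx, rfl⟩ := hf
    apply cyc_fix
    left
    have hxA : x ∈ A := Finset.mem_of_mem_erase hx
    have hmx : m < x := lt_of_le_of_ne (A.min'_le x hxA) (Ne.symm (Finset.ne_of_mem_erase hx))
    have := le_prevIn (A.min'_mem hne) hmx u
    omega
  unfold pcheck
  rw [sort_cons_min hne]
  simp only [List.map_cons, List.prod_cons]
  rw [List.map_congr_left hmapeq]
  rw [prevIn_of_empty (filter_lt_min_eq_empty hne) u,
    prevIn_of_empty (filter_lt_min_eq_empty hne) (u + 1)]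
  have h1 : u - 1 + 1 = u := by omega
  have h2 : u + 1 - 1 + 1 = u + 1 := by omega
  rw [h1, h2, cyc_cons (show u < m by omega)]
  rw [mul_assoc, mul_assoc]
  congr 1
  rw [← List.map_congr_left hmapeq]
  exact commute_swap (hfixP u (by omega)) (hfixP (u + 1) le_rfl)

lemma pcheck_insert {u : ℕ} {A : Finset ℕ} (hu : 1 ≤ u) (hA : ∀ a ∈ A, u + 1 ≤ a) :
    pcheck u (insert u A) = pcheck (u + 1) A := by
  have huA : u ∉ A := fun h => by have := hA u h; omega
  unfold pcheck
  rw [sort_insert_min (fun b hb => by have := hA b hb; omega), List.map_cons, List.prod_cons]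
  have hfe : (insert u A).filter (· < u) = ∅ := by
    apply Finset.filter_eq_empty_iff.2
    intro a ha
    rcases Finset.mem_insert.1 ha with rfl | ha'
    · simp
    · have := hA a ha'; simp; omega
  rw [prevIn_of_empty hfe u]
  have h1 : u - 1 + 1 = u := by omega
  rw [h1, cyc_eq_one le_rfl, one_mul]
  congr 1
  apply List.map_congr_left
  intro x hx
  rw [Finset.mem_sort] at hx
  rw [prevIn_insert (by have := hA x hx; omega) (fun a ha => by have := hA a ha; omega)]

lemma bval_insert {u : ℕ} {π : Equiv.Perm ℕ} {A : Finset ℕ} (hu : 1 ≤ u)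
    (hA : ∀ a ∈ A, u + 1 ≤ a) : bval u π (insert u A) = bval (u + 1) π A := by
  have huA : u ∉ A := fun h => by have := hA u h; omega
  unfold bval
  rw [Finset.sum_insert huA]
  have hfe : (insert u A).filter (· < u) = ∅ := by
    apply Finset.filter_eq_empty_iff.2
    intro a ha
    rcases Finset.mem_insert.1 ha with rfl | ha'
    · simp
    · have := hA a ha'; simp; omega
  rw [prevIn_of_empty hfe u]
  have hIoo : Finset.Ioo (u - 1) u = ∅ := by
    apply Finset.eq_empty_of_forall_notMem
    intro a ha
    rw [Finset.mem_Ioo] at ha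
    omega
  rw [hIoo]
  simp only [Finset.filter_empty, Finset.card_empty, zero_add]
  apply Finset.sum_congr rfl
  intro x hx
  rw [prevIn_insert (by have := hA x hx; omega) (fun a ha => by have := hA a ha; omega)]

lemma bval_step {u : ℕ} {π : Equiv.Perm ℕ} {A : Finset ℕ} (hu : 1 ≤ u)
    (hA : ∀ a ∈ A, u + 1 ≤ a) (hne : A.Nonempty) :
    bval u π A = bval (u + 1) π A + (if π (A.min' hne) < π u then 1 else 0) := by
  set m := A.min' hne with hm
  have hmA : m ∈ A := A.min'_mem hne
  have humem : u + 1 ≤ m := hA m hmA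
  unfold bval
  rw [← Finset.insert_erase hmA, Finset.sum_insert (Finset.notMem_erase m A),
    Finset.sum_insert (Finset.notMem_erase m A)]
  rw [Finset.insert_erase hmA]
  have hrest : ∀ x ∈ A.erase m,
      ((Finset.Ioo (prevIn u A x) x).filter (fun j => π x < π j)).card =
      ((Finset.Ioo (prevIn (u + 1) A x) x).filter (fun j => π x < π j)).card := by
    intro x hx
    have hxA : x ∈ A := Finset.mem_of_mem_erase hx
    have hmx : m < x := lt_of_le_of_ne (A.min'_le x hxA) (Ne.symm (Finset.ne_of_mem_erase hx))
    rw [prevIn_congr ⟨m, Finset.mem_filter.2 ⟨hmA, hmx⟩⟩ u (u + 1)]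
  rw [Finset.sum_congr rfl hrest]
  rw [prevIn_of_empty (filter_lt_min_eq_empty hne) u,
    prevIn_of_empty (filter_lt_min_eq_empty hne) (u + 1)]
  have h2 : u + 1 - 1 = u := by omega
  rw [h2]
  have hIoo : Finset.Ioo (u - 1) m = insert u (Finset.Ioo u m) := by
    ext a
    simp only [Finset.mem_Ioo, Finset.mem_insert]
    omega
  rw [hIoo, Finset.filter_insert]
  by_cases hc : π m < π u
  · rw [if_pos hc, Finset.card_insert_of_notMem (by simp), if_pos hc]
    ring
  · rw [if_neg hc, if_neg hc]
    ring

lemma min_cond {π : Equiv.Perm ℕ} {A : Finset ℕ} (hne : A.Nonempty) {u : ℕ}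
    (hdec : ∀ x ∈ A, ∀ y ∈ A, x < y → π y < π x) :
    (π (A.min' hne) < π u ↔ ∀ y ∈ A, π y < π u) := by
  constructor
  · intro h y hy
    rcases eq_or_lt_of_le (A.min'_le y hy) with he | hlt
    · rw [← he]; exact h
    · exact lt_trans (hdec _ (A.min'_mem hne) _ hy hlt) h
  · intro h
    exact h _ (A.min'_mem hne)

lemma P_insert {π : Equiv.Perm ℕ} {u v : ℕ} {S : Finset ℕ} (huv : u < v)
    (hS : ∀ x ∈ S, u < x ∧ x < v)
    (hPS : ∀ x ∈ insert v S, ∀ y ∈ insert v S, x < y → π y < π x)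
    (hQS : ∀ y ∈ insert v S, π y < π u) :
    ∀ x ∈ insert v (insert u S), ∀ y ∈ insert v (insert u S), x < y → π y < π x := by
  intro x hx y hy hxy
  have hmem : ∀ z, z ∈ insert v (insert u S) → z = u ∨ z ∈ insert v S := by
    intro z hz
    rcases Finset.mem_insert.1 hz with rfl | hz'
    · right; exact Finset.mem_insert_self _ _
    · rcases Finset.mem_insert.1 hz' with rfl | hz''
      · left; rfl
      · right; exact Finset.mem_insert_of_mem hz''
  have hgt : ∀ z ∈ insert v S, u < z := by
    intro z hz
    rcases Finset.mem_insert.1 hz with rfl | hz'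
    · exact huv
    · exact (hS z hz').1
  rcases hmem x hx with rfl | hx'
  · rcases hmem y hy with rfl | hy'
    · omega
    · exact hQS y hy'
  · rcases hmem y hy with rfl | hy'
    · exact absurd (hgt x hx') (by omega)
    · exact hPS x hx' y hy' hxy

lemma cycle_perm_aux (R : Type*) [CommRing R] (H : Type*) [Ring H] [Algebra R H]
    (q : Rˣ) (n : ℕ) (T : Equiv.Perm ℕ → H)
    (hTmul : ∀ (i : ℕ) (w : Equiv.Perm ℕ), 1 ≤ i → i < n →
      T (Equiv.swap i (i + 1)) * T w =
        if w i < w (i + 1) then T (w * Equiv.swap i (i + 1))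
        else (q : R) • T (w * Equiv.swap i (i + 1)) + ((q : R) - 1) • T w)
    (π : Equiv.Perm ℕ) (v : ℕ) (hv : v ≤ n) :
    ∀ k u, 1 ≤ u → u ≤ v → v - u = k →
    (((List.range' u (v - u)).map (fun y => T (Equiv.swap y (y + 1)))).prod) * T π =
      ∑ S ∈ (Finset.Ioo (u - 1) v).powerset.filter
          (fun S : Finset ℕ => ∀ x ∈ insert v S, ∀ y ∈ insert v S, x < y → π y < π x),
        ((q : R) ^ (bval u π (insert v S)) * ((q : R) - 1) ^ ((insert v S).card - 1)) •
          T (π * pcheck u (insert v S)) := by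
  intro k
  induction k with
  | zero =>
    intro u hu huv hk
    have hvu : u = v := by omega
    subst hvu
    rename_i hu huv
    have hIoo : Finset.Ioo (u - 1) u = ∅ := by
      apply Finset.eq_empty_of_forall_notMem
      intro a ha
      rw [Finset.mem_Ioo] at ha
      omega
    rw [Nat.sub_self, hIoo, Finset.powerset_empty]
    have hfilt : ({∅} : Finset (Finset ℕ)).filter
        (fun S : Finset ℕ => ∀ x ∈ insert u S, ∀ y ∈ insert u S, x < y → π y < π x) = {∅} := by
      rw [Finset.filter_singleton, if_pos]
      intro x hx y hy hxy
      have hins : insert u (∅ : Finset ℕ) = {u} := rfl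
      rw [hins, Finset.mem_singleton] at hx hy
      omega
    rw [hfilt, Finset.sum_singleton]
    have hpe : ({u} : Finset ℕ).filter (· < u) = ∅ := by
      apply Finset.filter_eq_empty_iff.2
      intro a ha
      rw [Finset.mem_singleton] at ha
      omega
    have hprev : prevIn u {u} u = u - 1 := prevIn_of_empty hpe u
    have hins : insert u (∅ : Finset ℕ) = {u} := rfl
    have hb : bval u π (insert u ∅) = 0 := by
      unfold bval
      rw [hins, Finset.sum_singleton, hprev, hIoo]
      simp
    have hpc : pcheck u (insert u ∅) = 1 := by
      unfold pcheck
      rw [hins, Finset.sort_singleton, List.map_cons, List.map_nil,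
        List.prod_cons, List.prod_nil, mul_one, hprev]
      have h3 : u - 1 + 1 = u := by omega
      rw [h3, cyc_eq_one le_rfl]
    rw [hb, hpc, hins, Finset.card_singleton]
    simp
  | succ k ih =>
    intro u hu huv hk
    have huv' : u < v := by omega
    have hun : u < n := by omega
    have hrange : List.range' u (v - u) = u :: List.range' (u + 1) (v - (u + 1)) := by
      have h1 : v - u = (v - (u + 1)) + 1 := by omega
      rw [h1, List.range'_succ]
    rw [hrange, List.map_cons, List.prod_cons, mul_assoc,
      ih (u + 1) (by omega) (by omega) (by omega)]
    simp only [Nat.add_sub_cancel]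
    rw [Finset.mul_sum]
    -- abbreviations
    set P : Finset ℕ → Prop :=
      fun S => ∀ x ∈ insert v S, ∀ y ∈ insert v S, x < y → π y < π x with hP
    set t : Finset ℕ → H := fun S =>
      ((q : R) ^ (bval u π (insert v S)) * ((q : R) - 1) ^ ((insert v S).card - 1)) •
        T (π * pcheck u (insert v S)) with ht
    -- split RHS according to u ∈ S
    rw [← Finset.sum_filter_add_sum_filter_not
      (((Finset.Ioo (u - 1) v).powerset.filter P)) (fun S => u ∈ S) t]
    have hF0 : (((Finset.Ioo (u - 1) v).powerset.filter P)).filter (fun S => ¬ u ∈ S)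
        = (Finset.Ioo u v).powerset.filter P := by
      ext S
      simp only [Finset.mem_filter, Finset.mem_powerset, Finset.subset_iff, Finset.mem_Ioo]
      constructor
      · rintro ⟨⟨hsub, hPS⟩, hnu⟩
        refine ⟨fun {x} hxS => ?_, hPS⟩
        have h1 := hsub hxS
        have h2 : ¬ (x = u) := fun h => hnu (h ▸ hxS)
        omega
      · rintro ⟨hsub, hPS⟩
        refine ⟨⟨fun {x} hx => ?_, hPS⟩, fun hmem => ?_⟩
        · have := hsub hx; omega
        · have := hsub hmem; omega
    have hbij : ∑ S ∈ (((Finset.Ioo (u - 1) v).powerset.filter P)).filter (fun S => u ∈ S), t S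
        = ∑ S ∈ ((Finset.Ioo u v).powerset.filter P).filter
            (fun S : Finset ℕ => ∀ y ∈ insert v S, π y < π u), t (insert u S) := by
      refine Finset.sum_bij' (fun S _ => S.erase u) (fun S _ => insert u S)
        ?_ ?_ ?_ ?_ ?_
      · intro S hS
        simp only [Finset.mem_filter, Finset.mem_powerset] at hS ⊢
        obtain ⟨⟨hsub, hPS⟩, huS⟩ := hS
        have hSel : ∀ x ∈ S, u - 1 < x ∧ x < v := fun x hx => Finset.mem_Ioo.1 (hsub hx)
        have herase_sub : ∀ x ∈ insert v (S.erase u), x ∈ insert v S := by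
          intro x hx
          rcases Finset.mem_insert.1 hx with rfl | hx'
          · exact Finset.mem_insert_self _ _
          · exact Finset.mem_insert_of_mem (Finset.mem_of_mem_erase hx')
        refine ⟨⟨?_, ?_⟩, ?_⟩
        · intro x hx
          obtain ⟨hne, hxS⟩ := Finset.mem_erase.1 hx
          have := hSel x hxS
          rw [Finset.mem_Ioo]
          omega
        · intro x hx y hy hxy
          exact hPS x (herase_sub x hx) y (herase_sub y hy) hxy
        · intro y hy
          have hyA : y ∈ insert v S := herase_sub y hy
          have huy : u < y := by
            rcases Finset.mem_insert.1 hy with rfl | hy'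
            · omega
            · obtain ⟨hne, hyS⟩ := Finset.mem_erase.1 hy'
              have := hSel y hyS
              omega
          exact hPS u (Finset.mem_insert_of_mem huS) y hyA huy
      · intro S hS
        simp only [Finset.mem_filter, Finset.mem_powerset] at hS ⊢
        obtain ⟨⟨hsub, hPS⟩, hQS⟩ := hS
        have hSel : ∀ x ∈ S, u < x ∧ x < v := fun x hx => Finset.mem_Ioo.1 (hsub hx)
        refine ⟨⟨?_, P_insert huv' hSel hPS hQS⟩, Finset.mem_insert_self _ _⟩
        intro x hx
        rw [Finset.mem_Ioo]
        rcases Finset.mem_insert.1 hx with rfl | hx'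
        · omega
        · have := hSel x hx'
          omega
      · intro S hS
        simp only [Finset.mem_filter] at hS
        exact Finset.insert_erase hS.2
      · intro S hS
        simp only [Finset.mem_filter, Finset.mem_powerset] at hS
        apply Finset.erase_insert
        intro huS
        have := Finset.mem_Ioo.1 (hS.1.1 huS)
        omega
      · intro S hS
        simp only [Finset.mem_filter] at hS
        rw [Finset.insert_erase hS.2]
    rw [hF0, hbij, Finset.sum_filter (fun S : Finset ℕ => ∀ y ∈ insert v S, π y < π u)
      (fun S => t (insert u S)), ← Finset.sum_add_distrib]
    apply Finset.sum_congr rfl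
    intro S hS
    simp only [Finset.mem_filter, Finset.mem_powerset] at hS
    obtain ⟨hsub, hPS⟩ := hS
    have hSel : ∀ x ∈ S, u < x ∧ x < v := fun x hx => Finset.mem_Ioo.1 (hsub hx)
    have hAel : ∀ a ∈ insert v S, u + 1 ≤ a := by
      intro a ha
      rcases Finset.mem_insert.1 ha with rfl | ha'
      · omega
      · have := hSel a ha'; omega
    have hAne : (insert v S).Nonempty := ⟨v, Finset.mem_insert_self _ _⟩
    have hunotA : u ∉ insert v S := fun h => by have := hAel u h; omega
    have hpfix : pcheck (u + 1) (insert v S) u = u :=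
      pcheck_fix (Nat.lt_succ_self u) hAel
    have hpmin : pcheck (u + 1) (insert v S) (u + 1) = (insert v S).min' hAne :=
      pcheck_apply_min (by omega) hAel hAne
    have hQiff : (∀ y ∈ insert v S, π y < π u) ↔ π ((insert v S).min' hAne) < π u :=
      Iff.symm (min_cond hAne hPS)
    rw [mul_smul_comm, hTmul u _ hu hun]
    simp only [Equiv.Perm.mul_apply]
    simp only [hpfix, hpmin]
    by_cases hc : π u < π ((insert v S).min' hAne)
    · rw [if_pos hc, if_neg (fun hQ => by have := hQiff.1 hQ; omega), zero_add]
      simp only [ht]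
      rw [bval_step hu hAel hAne, if_neg (by omega), add_zero,
        pcheck_step hu hAel hAne, ← mul_assoc]
    · have hne2 : π u ≠ π ((insert v S).min' hAne) := fun h => by
        have h2 : u = (insert v S).min' hAne := π.injective h
        have h3 := hAel _ ((insert v S).min'_mem hAne)
        omega
      have hmu : π ((insert v S).min' hAne) < π u := by omega
      rw [if_neg hc, if_pos (hQiff.2 hmu)]
      simp only [ht]
      rw [bval_step hu hAel hAne, if_pos hmu, Finset.insert_comm,
        bval_insert hu hAel, pcheck_insert hu hAel,
        Finset.card_insert_of_notMem hunotA, Nat.add_sub_cancel,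
        pcheck_step hu hAel hAne, ← mul_assoc]
      have hcard : 1 ≤ (insert v S).card := Finset.card_pos.2 hAne
      have hpow : ((q : R) - 1) ^ (insert v S).card
          = ((q : R) - 1) ^ (((insert v S).card - 1) + 1) := by
        congr 1
        omega
      rw [hpow, smul_add, smul_smul, smul_smul]
      conv_rhs => rw [add_comm]
      congr 1
      · congr 1
        ring
      · congr 1
        ring


/-- Lemma 3.8 ('CyclePerm') of the paper.  Here the Hecke algebra basis
`T w` (for `w` in the symmetric group, acting on the right as in the paper, so that
the paper's product `στ` corresponds to `τ * σ` in `Equiv.Perm`) is axiomatized by the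
multiplication rule `T_i T_w = T_{s_i w}` if `ℓ(s_i w) > ℓ(w)` (i.e. `(i)w < (i+1)w`)
and `T_i T_w = q T_{s_i w} + (q−1) T_w` otherwise.  A tuple
`p = (u−1 = p₀ < p₁ < ⋯ < p_ε = v)` with `π(p₁) > ⋯ > π(p_ε)` is encoded by the set
`S = {p₁,…,p_{ε−1}} ⊆ (u−1, v)`, so `A = insert v S = {p₁,…,p_ε}`. -/
theorem cycle_perm (R : Type*) [CommRing R] (H : Type*) [Ring H] [Algebra R H]
    (q : Rˣ) (n : ℕ) (T : Equiv.Perm ℕ → H)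
    (hTmul : ∀ (i : ℕ) (w : Equiv.Perm ℕ), 1 ≤ i → i < n →
      T (Equiv.swap i (i + 1)) * T w =
        if w i < w (i + 1) then T (w * Equiv.swap i (i + 1))
        else (q : R) • T (w * Equiv.swap i (i + 1)) + ((q : R) - 1) • T w)
    (π : Equiv.Perm ℕ) (hπ : ∀ x, x < 1 ∨ n < x → π x = x)
    (u v : ℕ) (hu : 1 ≤ u) (huv : u ≤ v) (hv : v ≤ n) :
    (((List.range' u (v - u)).map (fun y => T (Equiv.swap y (y + 1)))).prod) * T π =
      ∑ S ∈ (Finset.Ioo (u - 1) v).powerset.filter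
          (fun S : Finset ℕ => ∀ x ∈ insert v S, ∀ y ∈ insert v S, x < y → π y < π x),
        ((q : R) ^ (bval u π (insert v S)) * ((q : R) - 1) ^ ((insert v S).card - 1)) •
          T (π * pcheck u (insert v S)) := by
  exact cycle_perm_aux R H q n T hTmul π v hv (v - u) u hu huv rfl
end

section
/- Let λ and μ be partitions of n and let γ > 0, a < z be such that μ_a = λ_a + γ, μ_z = λ_z − γ, and μ_i = λ_i for i ∉ {a, z} (so μ is a partition). Fix p ≥ 0 and e > 1. Suppose σ is a partition of n with a < y < z such that (λ, σ) is an (e,p)-Carter-Payne pair with parameters (a, y, γ) and (σ, μ) is an (e,p)-Carter-Payne pair with parameters (y, z, γ). If additionally both pairs are separated (λ_r − λ_{r+1} ≥ γ for a < r ≤ y, and σ_r − σ_{r+1} ≥ γ for y < r ≤ z), then (λ, μ) is a separated (e,p)-Carter-Payne pair with parameters (a, z, γ). -/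
/-- `ℓ_p(k)`: the smallest positive integer with `p^(ℓ_p(k)) > k` (for `p ≥ 2`). -/
def lpExp (p k : ℕ) : ℕ := Nat.log p k + 1

/-- The divisibility condition in the definition of an `(e,p)`-Carter-Payne pair:
with `h = λ_a − λ_z + z − a + γ`, if `p = 0` then `γ < e` and `e ∣ h`; if `p > 0` then
`e·p^(ℓ_p(⌊γ/e⌋)) ∣ h`. -/
def CarterPayneDiv (e p : ℕ) (lam : ℕ → ℕ) (a z γ : ℕ) : Prop :=
  if p = 0 then
    γ < e ∧ (e : ℤ) ∣ ((lam a : ℤ) - lam z + z - a + γ)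
  else
    ((e : ℤ) * (p : ℤ) ^ lpExp p (γ / e)) ∣ ((lam a : ℤ) - lam z + z - a + γ)

/-- `(λ, μ)` is an `(e,p)`-Carter-Payne pair with parameters `(a, z, γ)`. -/
def IsCarterPaynePair (e p : ℕ) (lam mu : ℕ → ℕ) (a z γ : ℕ) : Prop :=
  1 < e ∧ 0 < γ ∧ 0 < a ∧ a < z ∧
    mu a = lam a + γ ∧ mu z + γ = lam z ∧
    (∀ i, i ≠ a → i ≠ z → mu i = lam i) ∧
    CarterPayneDiv e p lam a z γ

/-- Separatedness: `λ_r − λ_{r+1} ≥ γ` for `a < r ≤ z`. -/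
def IsSeparated (lam : ℕ → ℕ) (a z γ : ℕ) : Prop :=
  ∀ r, a < r → r ≤ z → lam (r + 1) + γ ≤ lam r

/-- the combinatorial content of Theorem 1.2 of the paper: two separated
Carter-Payne pairs `(λ,σ)` with parameters `(a,y,γ)` and `(σ,μ)` with parameters
`(y,z,γ)` compose to a separated Carter-Payne pair `(λ,μ)` with parameters `(a,z,γ)`. -/
theorem carter_payne_pair_comp (e p n : ℕ) (hp : p = 0 ∨ p.Prime)
    (lam mu sigma : ℕ → ℕ)
    (hlam : ∀ i, 1 ≤ i → lam (i + 1) ≤ lam i)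
    (hmu : ∀ i, 1 ≤ i → mu (i + 1) ≤ mu i)
    (hsigma : ∀ i, 1 ≤ i → sigma (i + 1) ≤ sigma i)
    (hlamn : ∑ i ∈ Finset.Icc 1 n, lam i = n) (hlam0 : ∀ i, n < i → lam i = 0)
    (hmun : ∑ i ∈ Finset.Icc 1 n, mu i = n) (hmu0 : ∀ i, n < i → mu i = 0)
    (hsigman : ∑ i ∈ Finset.Icc 1 n, sigma i = n) (hsigma0 : ∀ i, n < i → sigma i = 0)
    (a y z γ : ℕ) (hay : a < y) (hyz : y < z) (hγ : 0 < γ)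
    (h1 : IsCarterPaynePair e p lam sigma a y γ) (h1s : IsSeparated lam a y γ)
    (h2 : IsCarterPaynePair e p sigma mu y z γ) (h2s : IsSeparated sigma y z γ) :
    IsCarterPaynePair e p lam mu a z γ ∧ IsSeparated lam a z γ := by
  obtain ⟨he, hγ', ha, hay', hsa, hsy, hsoth, hd1⟩ := h1
  obtain ⟨-, -, -, -, hmy, hmz, hmoth, hd2⟩ := h2
  have hsz : sigma z = lam z := hsoth z (by omega) (by omega)
  have hma : mu a = sigma a := hmoth a (by omega) (by omega)
  have key : ((lam a : ℤ) - lam z + z - a + γ) =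
      ((lam a : ℤ) - lam y + y - a + γ) + ((sigma y : ℤ) - sigma z + z - y + γ) := by
    have h1 := hsy
    have h2 := hsz
    push_cast
    omega
  refine ⟨⟨he, hγ, ha, by omega, by omega, by omega, ?_, ?_⟩, ?_⟩
  · intro i hia hiz
    by_cases hiy : i = y
    · subst hiy
      have := hmy
      omega
    · rw [hmoth i hiy hiz, hsoth i hia hiy]
  · unfold CarterPayneDiv at hd1 hd2 ⊢
    by_cases hp0 : p = 0
    · simp only [hp0, if_true] at hd1 hd2 ⊢
      exact ⟨hd1.1, key ▸ dvd_add hd1.2 hd2.2⟩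
    · simp only [hp0, if_false] at hd1 hd2 ⊢
      exact key ▸ dvd_add hd1 hd2
  · intro r hra hrz
    by_cases hry : r ≤ y
    · exact h1s r hra hry
    · have h := h2s r (by omega) hrz
      rw [hsoth r (by omega) (by omega), hsoth (r + 1) (by omega) (by omega)] at h
      exact h
end

section
/- Let p be a prime and γ a positive integer. Write γ = γ*·e + γ' with 0 ≤ γ' < e for an integer e > 1, and let ℓ_p(γ*) be the smallest positive integer with p^{ℓ_p(γ*)} > γ*. Suppose C is a negative integer with C ≡ 0 (mod e·p^{ℓ_p(γ*)}). Then for every integer j with 0 ≤ j ≤ γ − 1, ν_{e,p}(C − j) ≤ ν_{e,p}(C) and moreover for 1 ≤ X ≤ γ, ν_{e,p}(X) < ν_{e,p}(C), where ν_{e,p}(x) = 0 if e ∤ x and ν_{e,p}(x) = 1 + ν_p(x/e) otherwise. -/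
private lemma dvd_iff_le_val {p : ℕ} (hp : p.Prime) {z : ℤ} (hz : z ≠ 0) (n : ℕ) :
    (p : ℤ) ^ n ∣ z ↔ n ≤ padicValInt p z := by
  haveI := Fact.mk hp
  rw [padicValInt_dvd_iff]
  simp [hz]

/-- the arithmetic step in the final claim of Lemma 3.16 of the paper.
Here `Nat.log p (γ/e) + 1 = ℓ_p(γ*)` is the smallest positive integer `l` with
`p^l > γ* = ⌊γ/e⌋`. -/
theorem nuep_bounds (p e : ℕ) (hp : p.Prime) (he : 1 < e)
    (γ : ℕ) (hγ : 0 < γ) (C : ℤ) (hC : C < 0)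
    (hdvd : ((e : ℤ) * (p : ℤ) ^ (Nat.log p (γ / e) + 1)) ∣ C) :
    (∀ j : ℕ, j ≤ γ - 1 → nuep e p (C - j) ≤ nuep e p C) ∧
      (∀ X : ℕ, 1 ≤ X → X ≤ γ → nuep e p (X : ℤ) < nuep e p C) := by
  haveI := Fact.mk hp
  set ℓ : ℕ := Nat.log p (γ / e) + 1 with hℓ
  have hCne : C ≠ 0 := hC.ne
  have hCe : (e : ℤ) ∣ C := (dvd_mul_right _ _).trans hdvd
  obtain ⟨a, ha⟩ := hCe
  have hCe : (e : ℤ) ∣ C := ⟨a, ha⟩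
  have hepos : (0 : ℤ) < (e : ℤ) := by exact_mod_cast Nat.lt_of_lt_of_le Nat.zero_lt_one he.le
  have hane : a ≠ 0 := by rintro rfl; simp at ha; exact hCne ha
  have hCdiv : C / (e : ℤ) = a := by rw [ha, Int.mul_ediv_cancel_left _ hepos.ne']
  have hpa : (p : ℤ) ^ ℓ ∣ a := by
    obtain ⟨k, hk⟩ := hdvd
    refine ⟨k, ?_⟩
    have : (e : ℤ) * a = (e : ℤ) * ((p : ℤ) ^ ℓ * k) := by rw [← ha, hk]; ring
    exact mul_left_cancel₀ hepos.ne' this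
  have hval_a : ℓ ≤ padicValInt p a := (dvd_iff_le_val hp hane ℓ).mp hpa
  -- small values have valuation < ℓ
  have hsmall : ∀ m : ℕ, 0 < m → m ≤ γ / e → padicValNat p m < ℓ := by
    intro m hm hmle
    have hmlt : m < p ^ ℓ := lt_of_le_of_lt hmle (Nat.lt_pow_succ_log_self hp.one_lt _)
    by_contra h
    push_neg at h
    have : p ^ ℓ ∣ m := dvd_trans (pow_dvd_pow p h) (pow_padicValNat_dvd)
    exact absurd (Nat.le_of_dvd hm this) (not_le.mpr hmlt)
  constructor
  · intro j hj
    by_cases hdj : (e : ℤ) ∣ (C - j)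
    · have hej : (e : ℤ) ∣ (j : ℤ) := by
        have := dvd_sub (hCe) hdj
        simpa using this
      rcases Nat.eq_zero_or_pos j with rfl | hjpos
      · simp [nuep]
      have hejn : e ∣ j := by exact_mod_cast hej
      obtain ⟨bn, hbn⟩ := hejn
      have hbnpos : 0 < bn := by
        rcases Nat.eq_zero_or_pos bn with rfl | h
        · omega
        · exact h
      have hbnle : bn ≤ γ / e := by
        have : bn = j / e := by rw [hbn, Nat.mul_div_cancel_left _ (by omega : 0 < e)]
        rw [this]
        exact Nat.div_le_div_right (by omega)
      have hνb : padicValNat p bn < ℓ := hsmall bn hbnpos hbnle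
      have hsubeq : C - (j : ℤ) = (e : ℤ) * (a - (bn : ℤ)) := by
        rw [ha, hbn]; push_cast; ring
      have habne : a - (bn : ℤ) ≠ 0 := by
        intro h
        have : C - (j : ℤ) = 0 := by rw [hsubeq, h, mul_zero]
        have hj0 : (0:ℤ) ≤ (j : ℤ) := Int.natCast_nonneg j
        omega
      have hdivsub : (C - (j : ℤ)) / (e : ℤ) = a - (bn : ℤ) := by
        rw [hsubeq, Int.mul_ediv_cancel_left _ hepos.ne']
      have hkey : padicValInt p (a - (bn : ℤ)) ≤ padicValNat p bn := by
        by_contra h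
        push_neg at h
        set n : ℕ := padicValNat p bn + 1 with hn
        have h1 : (p : ℤ) ^ n ∣ (a - (bn : ℤ)) :=
          (dvd_iff_le_val hp habne n).mpr (by omega)
        have h2 : (p : ℤ) ^ n ∣ a := dvd_trans (pow_dvd_pow _ (by omega : n ≤ ℓ)) hpa
        have h3 : (p : ℤ) ^ n ∣ (bn : ℤ) := by
          have := dvd_sub h2 h1
          simpa using this
        have h4 : p ^ n ∣ bn := by exact_mod_cast h3
        have := (padicValNat_dvd_iff_le (by omega : bn ≠ 0)).mp h4
        omega
      have hL : nuep e p (C - j) = 1 + padicValInt p (a - (bn : ℤ)) := by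
        simp only [nuep, if_pos hdj, hdivsub]
      have hR : nuep e p C = 1 + padicValInt p a := by
        simp only [nuep, if_pos hCe, hCdiv]
      rw [hL, hR]
      omega
    · simp [nuep, hdj]
  · intro X hX1 hXγ
    have hposC : 0 < nuep e p C := by
      simp only [nuep, if_pos hCe]; omega
    by_cases hdX : (e : ℤ) ∣ (X : ℤ)
    · have heX : e ∣ X := by exact_mod_cast hdX
      set m : ℕ := X / e with hm
      have hmpos : 0 < m := Nat.div_pos (Nat.le_of_dvd hX1 heX) (by omega)
      have hmle : m ≤ γ / e := Nat.div_le_div_right hXγ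
      have hXdiv : (X : ℤ) / (e : ℤ) = (m : ℤ) := by
        rw [hm]; exact (Int.natCast_ediv X e).symm
      have h1 : nuep e p (X : ℤ) = 1 + padicValNat p m := by
        simp only [nuep, if_pos hdX, hXdiv, padicValInt.of_nat]
      have h2 : nuep e p C = 1 + padicValInt p a := by
        simp only [nuep, if_pos hCe, hCdiv]
      rw [h1, h2]
      have := hsmall m hmpos hmle
      omega
    · simp only [nuep, if_neg hdX]
      exact hposC
end
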